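/- arXiv:2204.09910 — 7 statements merged into one kernel-verified Lean document; each statement's English description precedes it below -/
import Mathlib

section
/- For every nonnegative integer n, the Motzkin polynomial satisfies the closed form M_n(t) = \sum_{j=0}^{\lfloor n/2 \rfloor} \binom{n}{2j} C_j t^{n-2j}, where C_j = \binom{2j}{j}/(j+1) is the j-th Catalan number. -/
open Polynomial

/-- The weight polynomials `M_{n,k}(t)` of Motzkin paths from `(0,0)` to `(n,k)`:
`M_{n,k} = M_{n-1,k-1} + t·M_{n-1,k} + M_{n-1,k+1}`, `M_{n,k} = 0` for `k < 0`,
`M_{0,k} = [k = 0]`. -/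
noncomputable def motzkinPoly : ℕ → ℤ → Polynomial ℤ
  | 0, k => if k = 0 then 1 else 0
  | n + 1, k =>
      if k < 0 then 0 else
        motzkinPoly n (k - 1) + X * motzkinPoly n k + motzkinPoly n (k + 1)
  termination_by n _ => n

def ballot : ℕ → ℕ → ℤ
  | 0, 0 => 1
  | 0, _ + 1 => 0
  | ℓ + 1, 0 => ballot ℓ 1
  | ℓ + 1, k + 1 => ballot ℓ k + ballot ℓ (k + 2)

lemma ballot_succ_zero (ℓ : ℕ) : ballot (ℓ + 1) 0 = ballot ℓ 1 := rfl
lemma ballot_succ_succ (ℓ k : ℕ) : ballot (ℓ + 1) (k + 1) = ballot ℓ k + ballot ℓ (k + 2) := rfl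
lemma ballot_zero_pos (k : ℕ) : ballot 0 (k + 1) = 0 := rfl

lemma ballot_odd (ℓ k : ℕ) (h : (ℓ + k) % 2 = 1) : ballot ℓ k = 0 := by
  induction ℓ generalizing k with
  | zero =>
    match k, h with
    | k + 1, _ => rfl
  | succ ℓ ih =>
    match k with
    | 0 => rw [ballot]; exact ih 1 (by omega)
    | k + 1 => rw [ballot, ih k (by omega), ih (k+2) (by omega)]; ring

lemma ballot_closed (ℓ k : ℕ) (h : (ℓ + k) % 2 = 0) :
    ballot ℓ k = (ℓ.choose ((ℓ + k) / 2) : ℤ) - (ℓ.choose ((ℓ + k) / 2 + 1) : ℤ) := by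
  induction ℓ generalizing k with
  | zero =>
    match k with
    | 0 => simp [ballot]
    | 1 => omega
    | k + 2 =>
      rw [show ballot 0 (k+2) = 0 from rfl, Nat.choose_eq_zero_of_lt (by omega),
        Nat.choose_eq_zero_of_lt (by omega)]
      simp
  | succ ℓ ih =>
    match k with
    | 0 =>
      rw [ballot, ih 1 (by omega)]
      -- ℓ odd, ℓ + 1 = 2u
      obtain ⟨u, hu⟩ : ∃ u, ℓ = 2 * u + 1 := ⟨ℓ / 2, by omega⟩
      subst hu
      rw [show (2*u+1+1+0)/2 = u+1 by omega]
      have h1 : (2*u+1+1).choose (u+1) = (2*u+1).choose u + (2*u+1).choose (u+1) :=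
        Nat.choose_succ_succ _ _
      have h2 : (2*u+1+1).choose (u+2) = (2*u+1).choose (u+1) + (2*u+1).choose (u+2) :=
        Nat.choose_succ_succ _ _
      have h3 : (2*u+1).choose u = (2*u+1).choose (u+1) := by
        rw [← Nat.choose_symm (by omega : u ≤ 2*u+1)]; congr 1; omega
      push_cast [h1, h2, h3]
      ring
    | k + 1 =>
      rw [ballot, ih k (by omega), ih (k+2) (by omega)]
      rw [show (ℓ + (k+2))/2 = (ℓ+k)/2 + 1 by omega, show (ℓ+1+(k+1))/2 = (ℓ+k)/2 + 1 by omega]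
      have h1 : (ℓ+1).choose ((ℓ+k)/2 + 1) = ℓ.choose ((ℓ+k)/2) + ℓ.choose ((ℓ+k)/2 + 1) :=
        Nat.choose_succ_succ _ _
      have h2 : (ℓ+1).choose ((ℓ+k)/2 + 2) = ℓ.choose ((ℓ+k)/2 + 1) + ℓ.choose ((ℓ+k)/2 + 2) :=
        Nat.choose_succ_succ _ _
      push_cast [h1, h2]
      ring

lemma ballot_even_zero (j : ℕ) : ballot (2 * j) 0 = (catalan j : ℤ) := by
  rw [ballot_closed (2*j) 0 (by omega), show (2*j+0)/2 = j by omega]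
  have h1 : (j + 1) * catalan j = (2*j).choose j := by
    rw [succ_mul_catalan_eq_centralBinom, Nat.centralBinom]
  have h2 : (2*j).choose (j+1) * (j+1) = (2*j).choose j * j := by
    rw [Nat.choose_succ_right_eq]; congr 1; omega
  have hj : ((j : ℤ) + 1) ≠ 0 := by positivity
  have : ((j:ℤ)+1) * (((2*j).choose j : ℤ) - ((2*j).choose (j+1) : ℤ)) = ((j:ℤ)+1) * catalan j := by
    have h1' : ((j:ℤ) + 1) * catalan j = ((2*j).choose j : ℤ) := by exact_mod_cast h1
    have h2' : ((2*j).choose (j+1) : ℤ) * ((j:ℤ)+1) = ((2*j).choose j : ℤ) * j := by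
      exact_mod_cast h2
    nlinarith [h1', h2']
  exact mul_left_cancel₀ hj this

noncomputable def NP (n k : ℕ) : Polynomial ℤ :=
  ∑ m ∈ Finset.range (n + 1), C ((n.choose m : ℤ) * ballot (n - m) k) * X ^ m

lemma coeff_NP (n k i : ℕ) :
    (NP n k).coeff i = if i ≤ n then (n.choose i : ℤ) * ballot (n - i) k else 0 := by
  rw [NP, finset_sum_coeff]
  simp only [coeff_C_mul, coeff_X_pow, mul_ite, mul_one, mul_zero]
  rw [Finset.sum_ite_eq (Finset.range (n+1)) i]
  simp [Nat.lt_succ_iff]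

lemma NP_rec_zero (n : ℕ) : NP (n + 1) 0 = X * NP n 0 + NP n 1 := by
  ext i
  rw [coeff_add, coeff_NP]
  match i with
  | 0 =>
    rw [coeff_X_mul_zero, coeff_NP]
    simp only [if_pos (Nat.zero_le _), Nat.choose_zero_right, Nat.sub_zero,
      ballot_succ_zero, Nat.cast_one, one_mul, zero_add]
  | i + 1 =>
    rw [coeff_X_mul, coeff_NP, coeff_NP]
    rcases lt_trichotomy i n with h | h | h
    · rw [if_pos (by omega), if_pos (by omega), if_pos (by omega)]
      have hb : ballot (n - i) 0 = ballot (n - (i + 1)) 1 := by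
        rw [show n - i = (n - (i+1)) + 1 by omega, ballot_succ_zero]
      rw [show n + 1 - (i+1) = n - i by omega, hb, Nat.choose_succ_succ]
      push_cast; ring
    · subst h
      rw [if_pos (by omega), if_pos le_rfl, if_neg (by omega)]
      simp [Nat.sub_self, show ballot 0 0 = 1 from rfl]
    · rw [if_neg (by omega), if_neg (by omega), if_neg (by omega)]; ring

lemma NP_rec_succ (n k : ℕ) :
    NP (n + 1) (k + 1) = NP n k + X * NP n (k + 1) + NP n (k + 2) := by
  ext i
  rw [coeff_add, coeff_add, coeff_NP]
  match i with
  | 0 =>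
    rw [coeff_X_mul_zero, coeff_NP, coeff_NP]
    simp only [if_pos (Nat.zero_le _), Nat.choose_zero_right, Nat.sub_zero,
      ballot_succ_succ, Nat.cast_one, one_mul, add_zero]
  | i + 1 =>
    rw [coeff_X_mul, coeff_NP, coeff_NP, coeff_NP]
    rcases lt_trichotomy i n with h | h | h
    · rw [if_pos (by omega), if_pos (by omega), if_pos (by omega), if_pos (by omega)]
      have hb : ballot (n - i) (k + 1) = ballot (n - (i+1)) k + ballot (n - (i+1)) (k + 2) := by
        rw [show n - i = (n - (i+1)) + 1 by omega, ballot_succ_succ]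
      rw [show n + 1 - (i+1) = n - i by omega, hb, Nat.choose_succ_succ]
      push_cast; ring
    · subst h
      rw [if_pos (by omega), if_neg (by omega), if_pos le_rfl, if_neg (by omega)]
      simp [Nat.sub_self, ballot_zero_pos]
    · rw [if_neg (by omega), if_neg (by omega), if_neg (by omega), if_neg (by omega)]; ring

lemma motzkinPoly_neg (n : ℕ) (k : ℤ) (hk : k < 0) : motzkinPoly n k = 0 := by
  cases n with
  | zero => rw [motzkinPoly, if_neg (by omega)]
  | succ n => rw [motzkinPoly, if_pos hk]

lemma motzkinPoly_eq_NP (n : ℕ) : ∀ k : ℕ, motzkinPoly n (k : ℤ) = NP n k := by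
  induction n with
  | zero =>
    intro k
    rw [motzkinPoly, NP]
    match k with
    | 0 => simp [ballot]
    | k + 1 =>
      rw [if_neg (by omega)]
      simp [ballot_zero_pos]
  | succ n ih =>
    intro k
    rw [motzkinPoly, if_neg (by omega)]
    match k with
    | 0 =>
      rw [show ((0:ℕ):ℤ) - 1 = -1 by norm_num, motzkinPoly_neg n (-1) (by norm_num)]
      rw [show ((0:ℕ):ℤ) + 1 = ((1:ℕ):ℤ) by norm_num]
      rw [show ((0:ℕ):ℤ) = ((0:ℕ):ℤ) from rfl]
      rw [ih 0, ih 1, NP_rec_zero, zero_add]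
    | k + 1 =>
      rw [show ((k+1:ℕ):ℤ) - 1 = ((k:ℕ):ℤ) by push_cast; ring,
        show ((k+1:ℕ):ℤ) + 1 = ((k+2:ℕ):ℤ) by push_cast; ring,
        ih k, ih (k+1), ih (k+2), NP_rec_succ]


/-- `M_n(t) = ∑_{j=0}^{⌊n/2⌋} C(n, 2j) · Catalan(j) · t^{n-2j}`. -/
theorem motzkinPoly_closed_form (n : ℕ) :
    motzkinPoly n 0 =
      ∑ j ∈ Finset.range (n / 2 + 1),
        C ((n.choose (2 * j) : ℤ) * (catalan j : ℤ)) * X ^ (n - 2 * j) := by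
  have h0 : motzkinPoly n 0 = NP n 0 := by
    have := motzkinPoly_eq_NP n 0
    simpa using this
  rw [h0, NP]
  have hz : ∀ m ∈ Finset.range (n+1),
      C ((n.choose m : ℤ) * ballot (n - m) 0) * X ^ m ≠ 0 → (n - m) % 2 = 0 := by
    intro m _ hm
    by_contra hodd
    rw [ballot_odd (n - m) 0 (by omega)] at hm
    simp at hm
  rw [← Finset.sum_filter_of_ne hz]
  refine (Finset.sum_nbij' (fun j => n - 2 * j) (fun m => (n - m) / 2)
    ?_ ?_ ?_ ?_ ?_).symm
  · intro j hj
    simp only [Finset.mem_filter, Finset.mem_range] at *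
    omega
  · intro m hm
    simp only [Finset.mem_filter, Finset.mem_range] at *
    omega
  · intro j hj
    simp only [Finset.mem_range] at hj
    show (n - (n - 2 * j)) / 2 = j
    omega
  · intro m hm
    simp only [Finset.mem_filter, Finset.mem_range] at hm
    show n - 2 * ((n - m) / 2) = m
    omega
  · intro j hj
    simp only [Finset.mem_range] at hj
    have h2j : 2 * j ≤ n := by omega
    rw [show n - (n - 2 * j) = 2 * j by omega, ballot_even_zero,
      Nat.choose_symm h2j]
end

section
/- For every nonnegative integer n, the Hankel determinant d_0(n,t) = \det( M_{i+j}(t) )_{i,j=0}^{n-1} equals 1 (with the convention that the empty determinant for n = 0 equals 1). -/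
open Polynomial Finset

lemma mz_neg (n : ℕ) (k : ℤ) (h : k < 0) : motzkinPoly n k = 0 := by
  cases n with
  | zero => simp [motzkinPoly]; omega
  | succ m => simp [motzkinPoly, h]

lemma mz_rec (n : ℕ) (k : ℤ) (h : 0 ≤ k) :
    motzkinPoly (n+1) k = motzkinPoly n (k-1) + X * motzkinPoly n k + motzkinPoly n (k+1) := by
  simp [motzkinPoly, not_lt.2 h]

lemma mz_gt (n : ℕ) (k : ℤ) (h : (n : ℤ) < k) : motzkinPoly n k = 0 := by
  induction n generalizing k with
  | zero => simp [motzkinPoly]; omega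
  | succ m ih =>
      rw [mz_rec m k (by omega)]
      rw [ih (k-1) (by omega), ih k (by omega),
        ih (k+1) (by omega)]
      ring

lemma mz_diag (n : ℕ) : motzkinPoly n n = 1 := by
  induction n with
  | zero => simp [motzkinPoly]
  | succ m ih =>
      rw [mz_rec m _ (by positivity)]
      have h1 : ((m:ℤ)+1) - 1 = (m:ℤ) := by ring
      push_cast
      rw [h1, ih, mz_gt m ((m:ℤ)+1) (by omega), mz_gt m ((m:ℤ)+1+1) (by omega)]
      ring

lemma shift1 (c d m : ℕ) (hd : d + 1 ≤ m + 1) :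
    ∑ k ∈ range (m+1), motzkinPoly c ((k:ℤ)-1) * motzkinPoly d (k:ℤ)
      = ∑ k ∈ range (m+1), motzkinPoly c (k:ℤ) * motzkinPoly d ((k:ℤ)+1) := by
  rw [Finset.sum_range_succ' (fun k => motzkinPoly c ((k:ℤ)-1) * motzkinPoly d (k:ℤ)) m,
    Finset.sum_range_succ]
  have h0 : motzkinPoly c (((0:ℕ):ℤ)-1) = 0 := mz_neg _ _ (by norm_num)
  have h1 : motzkinPoly d ((m:ℤ)+1) = 0 := mz_gt _ _ (by exact_mod_cast by omega)
  rw [h0, h1]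
  simp only [zero_mul, mul_zero, add_zero]
  refine Finset.sum_congr rfl fun k _ => ?_
  have e : ((k:ℤ)+1) - 1 = (k:ℤ) := by ring
  push_cast [e]
  rfl

lemma shiftsum (a b m : ℕ) (ha : a + 1 ≤ m + 1) (hb : b + 1 ≤ m + 1) :
    ∑ k ∈ range (m+1), motzkinPoly (a+1) (k:ℤ) * motzkinPoly b (k:ℤ)
      = ∑ k ∈ range (m+1), motzkinPoly a (k:ℤ) * motzkinPoly (b+1) (k:ℤ) := by
  have e1 : ∀ k ∈ range (m+1), motzkinPoly (a+1) (k:ℤ) * motzkinPoly b (k:ℤ)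
      = motzkinPoly a ((k:ℤ)-1) * motzkinPoly b (k:ℤ)
        + X * (motzkinPoly a (k:ℤ) * motzkinPoly b (k:ℤ))
        + motzkinPoly b ((k:ℤ)-1) * motzkinPoly a (k:ℤ)
        - motzkinPoly b ((k:ℤ)-1) * motzkinPoly a (k:ℤ)
        + motzkinPoly a ((k:ℤ)+1) * motzkinPoly b (k:ℤ) := by
    intro k _
    rw [mz_rec a (k:ℤ) (by positivity)]
    ring
  have e2 : ∀ k ∈ range (m+1), motzkinPoly a (k:ℤ) * motzkinPoly (b+1) (k:ℤ)
      = motzkinPoly b ((k:ℤ)-1) * motzkinPoly a (k:ℤ)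
        + X * (motzkinPoly a (k:ℤ) * motzkinPoly b (k:ℤ))
        + motzkinPoly a ((k:ℤ)-1) * motzkinPoly b (k:ℤ)
        - motzkinPoly a ((k:ℤ)-1) * motzkinPoly b (k:ℤ)
        + motzkinPoly b ((k:ℤ)+1) * motzkinPoly a (k:ℤ) := by
    intro k _
    rw [mz_rec b (k:ℤ) (by positivity)]
    ring
  rw [Finset.sum_congr rfl e1, Finset.sum_congr rfl e2]
  simp only [Finset.sum_add_distrib, Finset.sum_sub_distrib]
  rw [shift1 a b m hb, shift1 b a m ha]
  have c1 : ∀ k ∈ range (m+1), motzkinPoly a (k:ℤ) * motzkinPoly b ((k:ℤ)+1)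
      = motzkinPoly b ((k:ℤ)+1) * motzkinPoly a (k:ℤ) := fun k _ => mul_comm _ _
  have c2 : ∀ k ∈ range (m+1), motzkinPoly b (k:ℤ) * motzkinPoly a ((k:ℤ)+1)
      = motzkinPoly a ((k:ℤ)+1) * motzkinPoly b (k:ℤ) := fun k _ => mul_comm _ _
  rw [Finset.sum_congr rfl c1, Finset.sum_congr rfl c2]
  ring

lemma key (a : ℕ) : ∀ b m : ℕ, a + b ≤ m →
    motzkinPoly (a+b) 0 = ∑ k ∈ range (m+1), motzkinPoly a (k:ℤ) * motzkinPoly b (k:ℤ) := by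
  induction a with
  | zero =>
      intro b m _
      rw [Finset.sum_range_succ' (fun k => motzkinPoly 0 (k:ℤ) * motzkinPoly b (k:ℤ)) m]
      have : ∀ k ∈ range m, motzkinPoly 0 ((k:ℤ)+1) * motzkinPoly b ((k:ℤ)+1) = 0 := by
        intro k _
        rw [mz_gt 0 ((k:ℤ)+1) (by positivity)]
        ring
      push_cast
      rw [Finset.sum_congr rfl this]
      simp [motzkinPoly]
  | succ a ih =>
      intro b m h
      have h1 : a + 1 + b = a + (b + 1) := by omega
      rw [h1, ih (b+1) m (by omega), ← shiftsum a b m (by omega) (by omega)]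

lemma key' (a b n : ℕ) (ha : a < n) :
    motzkinPoly (a+b) 0 = ∑ k ∈ range n, motzkinPoly a (k:ℤ) * motzkinPoly b (k:ℤ) := by
  rw [key a b (a+b+n) (by omega)]
  refine (Finset.sum_subset (Finset.range_subset_range.2 (by omega)) fun k _ hk => ?_).symm
  rw [Finset.mem_range, not_lt] at hk
  rw [mz_gt a (k:ℤ) (by exact_mod_cast by omega)]
  ring

/-- The Hankel determinant `d_0(n,t) = det(M_{i+j}(t))` equals `1`. -/
theorem hankel_det_motzkin (n : ℕ) :
    Matrix.det (Matrix.of fun i j : Fin n => motzkinPoly ((i : ℕ) + (j : ℕ)) 0) = 1 := by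
  set A : Matrix (Fin n) (Fin n) (Polynomial ℤ) :=
    Matrix.of fun i k : Fin n => motzkinPoly (i : ℕ) ((k : ℕ) : ℤ) with hAdef
  have hA : (Matrix.of fun i j : Fin n => motzkinPoly ((i : ℕ) + (j : ℕ)) 0) = A * A.transpose := by
    refine Matrix.ext fun i j => ?_
    simp only [Matrix.mul_apply, Matrix.transpose_apply, Matrix.of_apply, hAdef]
    rw [Fin.sum_univ_eq_sum_range
      (fun k => motzkinPoly (i : ℕ) (k : ℤ) * motzkinPoly (j : ℕ) (k : ℤ)) n]
    exact key' i j n i.isLt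
  rw [hA, Matrix.det_mul, Matrix.det_transpose]
  have htri : A.BlockTriangular OrderDual.toDual := by
    intro i j hij
    simp only [hAdef, Matrix.of_apply]
    exact mz_gt _ _ (by exact_mod_cast hij)
  rw [Matrix.det_of_lowerTriangular A htri]
  have : ∀ i : Fin n, A i i = 1 := fun i => mz_diag i
  simp [this]
end

section
/- In the ring of formal power series over \mathbb{Z}[t], the generating function D_2(x,t) = \sum_{n \geq 0} d_2(n,t) x^n of the Hankel determinants d_2(n,t) = \det( M_{2+i+j}(t) )_{i,j=0}^{n-1} (with d_2(0,t) = 1) satisfies (1-x)^2 (1 - (t^2-2)x + x^2) \cdot D_2(x,t) = 1 + x. -/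
open Polynomial Matrix

lemma motz_neg (n : ℕ) {k : ℤ} (hk : k < 0) : motzkinPoly n k = 0 := by
  cases n with
  | zero => simp [motzkinPoly, hk.ne]
  | succ n => rw [motzkinPoly]; simp [hk]

lemma motz_rec (n : ℕ) {k : ℤ} (hk : 0 ≤ k) :
    motzkinPoly (n + 1) k
      = motzkinPoly n (k - 1) + X * motzkinPoly n k + motzkinPoly n (k + 1) := by
  rw [motzkinPoly]; simp [not_lt.mpr hk]

lemma motz_gt : ∀ (n : ℕ) {k : ℤ}, (n : ℤ) < k → motzkinPoly n k = 0 := by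
  intro n
  induction n with
  | zero => intro k hk; simp [motzkinPoly]; omega
  | succ n ih =>
      intro k hk
      have h0 : (0:ℤ) ≤ k := by omega
      rw [motz_rec n h0, ih (by omega), ih (by omega), ih (by omega)]
      ring

lemma motz_diag : ∀ n : ℕ, motzkinPoly n n = 1 := by
  intro n
  induction n with
  | zero => simp [motzkinPoly]
  | succ n ih =>
      rw [show ((n+1 : ℕ) : ℤ) = (n : ℤ) + 1 by push_cast; ring,
        motz_rec n (by positivity)]
      rw [show (n : ℤ) + 1 - 1 = (n : ℤ) by ring, ih,
        motz_gt n (by omega), motz_gt n (by omega)]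
      ring

lemma shift_left (a b N : ℕ) (hb : b < N) :
    ∑ k ∈ Finset.range N, motzkinPoly a ((k : ℤ) - 1) * motzkinPoly b k
      = ∑ k ∈ Finset.range N, motzkinPoly a k * motzkinPoly b ((k : ℤ) + 1) := by
  obtain ⟨m, rfl⟩ : ∃ m, N = m + 1 := ⟨N - 1, by omega⟩
  rw [Finset.sum_range_succ' (fun k => motzkinPoly a ((k : ℤ) - 1) * motzkinPoly b k) m,
    Finset.sum_range_succ (fun k => motzkinPoly a k * motzkinPoly b ((k : ℤ) + 1)) m]
  have h1 : motzkinPoly a ((0 : ℤ) - 1) = 0 := motz_neg a (by norm_num)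
  have h2 : motzkinPoly b ((m : ℤ) + 1) = 0 := motz_gt b (by push_cast; omega)
  simp only [Nat.cast_zero, h1, zero_mul, add_zero, h2, mul_zero]
  apply Finset.sum_congr rfl
  intro k _
  push_cast
  ring_nf

lemma shift_right (a b N : ℕ) (hab : a < N ∨ b + 1 < N) :
    ∑ k ∈ Finset.range N, motzkinPoly a ((k : ℤ) + 1) * motzkinPoly b k
      = ∑ k ∈ Finset.range N, motzkinPoly a k * motzkinPoly b ((k : ℤ) - 1) := by
  obtain ⟨m, rfl⟩ : ∃ m, N = m + 1 := ⟨N - 1, by omega⟩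
  rw [Finset.sum_range_succ (fun k => motzkinPoly a ((k : ℤ) + 1) * motzkinPoly b k) m,
    Finset.sum_range_succ' (fun k => motzkinPoly a k * motzkinPoly b ((k : ℤ) - 1)) m]
  have h1 : motzkinPoly b ((0 : ℤ) - 1) = 0 := motz_neg b (by norm_num)
  have h2 : motzkinPoly a ((m : ℤ) + 1) * motzkinPoly b m = 0 := by
    rcases hab with h | h
    · rw [motz_gt a (by push_cast; omega), zero_mul]
    · rw [motz_gt b (by push_cast; omega), mul_zero]
  simp only [Nat.cast_zero, h1, mul_zero, add_zero, h2]
  apply Finset.sum_congr rfl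
  intro k _
  push_cast
  ring_nf

lemma motz_swap (a b N : ℕ) (ha : b + 1 < N) :
    ∑ k ∈ Finset.range N, motzkinPoly (a + 1) k * motzkinPoly b k
      = ∑ k ∈ Finset.range N, motzkinPoly a k * motzkinPoly (b + 1) k := by
  have e1 : ∀ k ∈ Finset.range N, motzkinPoly (a + 1) (k : ℤ) * motzkinPoly b k
      = motzkinPoly a ((k : ℤ) - 1) * motzkinPoly b k
        + X * (motzkinPoly a k * motzkinPoly b k)
        + motzkinPoly a ((k : ℤ) + 1) * motzkinPoly b k := by
    intro k _; rw [motz_rec a (by positivity)]; ring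
  have e2 : ∀ k ∈ Finset.range N, motzkinPoly a (k : ℤ) * motzkinPoly (b + 1) k
      = motzkinPoly a k * motzkinPoly b ((k : ℤ) - 1)
        + X * (motzkinPoly a k * motzkinPoly b k)
        + motzkinPoly a k * motzkinPoly b ((k : ℤ) + 1) := by
    intro k _; rw [motz_rec b (by positivity)]; ring
  rw [Finset.sum_congr rfl e1, Finset.sum_congr rfl e2, Finset.sum_add_distrib,
    Finset.sum_add_distrib, Finset.sum_add_distrib, Finset.sum_add_distrib,
    shift_left a b N (by omega), shift_right a b N (Or.inr ha)]
  ring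

lemma motz_conv : ∀ (b a N : ℕ), b < N →
    ∑ k ∈ Finset.range N, motzkinPoly a k * motzkinPoly b k = motzkinPoly (a + b) 0 := by
  intro b
  induction b with
  | zero =>
      intro a N hN
      rw [Finset.sum_eq_single 0]
      · have : motzkinPoly 0 ((0:ℕ):ℤ) = 1 := by exact_mod_cast motz_diag 0
        rw [this, mul_one, Nat.cast_zero, Nat.add_zero]
      · intro k _ hk
        have : motzkinPoly 0 (k : ℤ) = 0 := motz_gt 0 (by push_cast; omega)
        rw [this, mul_zero]
      · intro h; exact absurd (Finset.mem_range.mpr hN) h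
  | succ b ih =>
      intro a N hN
      rw [← motz_swap a b N hN, ih (a + 1) N (by omega)]
      congr 1
      omega

noncomputable def tfun (j k : ℕ) : Polynomial ℤ :=
  if j = k then X else if j = k + 1 ∨ k = j + 1 then 1 else 0

lemma tfun_split (j k : ℕ) :
    tfun j k = (if j = k then X else 0) + (if j = k + 1 then (1:Polynomial ℤ) else 0)
      + (if k = j + 1 then (1:Polynomial ℤ) else 0) := by
  unfold tfun
  split_ifs <;> first | (exfalso; omega) | ring

noncomputable def triT (m : ℕ) : Matrix (Fin m) (Fin m) (Polynomial ℤ) :=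
  Matrix.of fun j k => tfun j k

noncomputable def lowL (m : ℕ) : Matrix (Fin m) (Fin m) (Polynomial ℤ) :=
  Matrix.of fun i k => motzkinPoly i k

noncomputable def bhat (m : ℕ) : Matrix (Fin m) (Fin m) (Polynomial ℤ) :=
  Matrix.of fun i k => motzkinPoly (i + 1) k

lemma bhat_eq (m : ℕ) : bhat m = lowL m * triT m := by
  ext i k
  rw [Matrix.mul_apply]
  simp only [bhat, lowL, triT, Matrix.of_apply]
  rw [Fin.sum_univ_eq_sum_range (fun j => motzkinPoly i (j : ℤ) * tfun j k) m]
  have hext : ∑ j ∈ Finset.range (m + 2), motzkinPoly i (j : ℤ) * tfun j k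
      = ∑ j ∈ Finset.range m, motzkinPoly i (j : ℤ) * tfun j k := by
    rw [Finset.sum_range_succ, Finset.sum_range_succ,
      motz_gt (i : ℕ) (by exact_mod_cast i.isLt),
      motz_gt (i : ℕ) (by push_cast; omega)]
    simp
  rw [← hext]
  have collapse : ∀ (c : ℕ), c < m + 2 → ∀ f : ℕ → Polynomial ℤ,
      ∑ j ∈ Finset.range (m + 2), (if j = c then f j else 0) = f c := by
    intro c hc f
    rw [Finset.sum_ite_eq' (Finset.range (m + 2)) c f]
    simp [hc]
  simp only [tfun_split, mul_add, mul_ite, mul_one, mul_zero]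
  rw [Finset.sum_add_distrib, Finset.sum_add_distrib]
  rw [collapse k (by omega) (fun j => motzkinPoly i (j:ℤ) * X),
    collapse (k + 1) (by omega) (fun j => motzkinPoly i (j:ℤ))]
  have h3 : ∑ j ∈ Finset.range (m + 2), (if (k : ℕ) = j + 1 then motzkinPoly i (j:ℤ) else 0)
      = motzkinPoly i ((k : ℤ) - 1) := by
    rcases hk : (k : ℕ) with _ | k'
    · rw [Finset.sum_eq_zero, show (((0:ℕ)) : ℤ) - 1 = -1 by norm_num,
        motz_neg i (by norm_num)]
      intro j _
      simp
    · have hcond : ∀ j : ℕ, ((k' + 1 : ℕ) = j + 1) ↔ (j = k') := by intro j; omega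
      simp only [hcond]
      rw [collapse k' (by omega) (fun j => motzkinPoly i (j:ℤ))]
      congr 1
      push_cast
      ring
  rw [h3, motz_rec i (by positivity)]
  push_cast
  ring

noncomputable def delta : ℕ → Polynomial ℤ
  | 0 => 1
  | 1 => X
  | n + 2 => X * delta (n + 1) - delta n

lemma tfun_zero {j k : ℕ} (h1 : j ≠ k) (h2 : j ≠ k + 1) (h3 : k ≠ j + 1) : tfun j k = 0 := by
  simp [tfun, h1, h2, h3]

lemma tfun_self (k : ℕ) : tfun k k = X := by simp [tfun]

lemma tfun_down (k : ℕ) : tfun (k + 1) k = 1 := by simp [tfun]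

lemma tfun_up (k : ℕ) : tfun k (k + 1) = 1 := by simp [tfun]

lemma val_succAbove {n : ℕ} (p : Fin (n + 1)) (i : Fin n) :
    ((p.succAbove i : Fin (n + 1)) : ℕ) = if (i : ℕ) < (p : ℕ) then (i : ℕ) else (i : ℕ) + 1 := by
  rcases lt_or_ge (Fin.castSucc i) p with h | h
  · rw [Fin.succAbove_of_castSucc_lt p i h, Fin.coe_castSucc,
      if_pos (by simpa [Fin.lt_iff_val_lt_val] using h)]
  · rw [Fin.succAbove_of_le_castSucc p i h, Fin.val_succ,
      if_neg (by simp [Fin.le_iff_val_le_val] at h; omega)]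

/-- expansion when the last row is a unit vector -/
lemma det_unit_last_row {m : ℕ} (A : Matrix (Fin (m + 1)) (Fin (m + 1)) (Polynomial ℤ))
    (h : ∀ j, A (Fin.last m) j = if j = Fin.last m then 1 else 0) :
    A.det = (A.submatrix Fin.castSucc Fin.castSucc).det := by
  rw [Matrix.det_succ_row A (Fin.last m)]
  rw [Fin.sum_univ_castSucc]
  have hz : ∀ j : Fin m,
      (-1 : Polynomial ℤ) ^ ((Fin.last m : ℕ) + ((Fin.castSucc j : Fin (m+1)) : ℕ))
          * A (Fin.last m) (Fin.castSucc j)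
          * (A.submatrix (Fin.last m).succAbove (Fin.castSucc j).succAbove).det = 0 := by
    intro j
    rw [h (Fin.castSucc j), if_neg (by simp [Fin.ext_iff]; omega), mul_zero, zero_mul]
  rw [Finset.sum_eq_zero (fun j _ => hz j), zero_add, h (Fin.last m), if_pos rfl,
    Fin.succAbove_last]
  rw [Fin.val_last]
  have hpow : (-1 : Polynomial ℤ) ^ (m + m) = 1 := by
    rw [← two_mul, pow_mul]
    norm_num
  rw [hpow, one_mul, one_mul]

lemma det_unit_last_col {m : ℕ} (A : Matrix (Fin (m + 1)) (Fin (m + 1)) (Polynomial ℤ))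
    (h : ∀ i, A i (Fin.last m) = if i = Fin.last m then 1 else 0) :
    A.det = (A.submatrix Fin.castSucc Fin.castSucc).det := by
  rw [← Matrix.det_transpose A, det_unit_last_row Aᵀ (fun j => h j), ← Matrix.det_transpose
    (A.submatrix Fin.castSucc Fin.castSucc), Matrix.transpose_submatrix]

lemma detT : ∀ m, (triT m).det = delta m := by
  have key : ∀ m, (triT (m + 2)).det = X * (triT (m + 1)).det - (triT m).det := by
    intro m
    rw [Matrix.det_succ_row (triT (m + 2)) (Fin.last (m + 1)), Fin.sum_univ_castSucc,
      Fin.sum_univ_castSucc]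
    have hz : ∀ j : Fin m, (-1 : Polynomial ℤ) ^
          ((Fin.last (m + 1) : ℕ) + ((Fin.castSucc (Fin.castSucc j)) : ℕ))
          * triT (m + 2) (Fin.last (m + 1)) (Fin.castSucc (Fin.castSucc j))
          * ((triT (m + 2)).submatrix (Fin.last (m + 1)).succAbove
              (Fin.castSucc (Fin.castSucc j)).succAbove).det = 0 := by
      intro j
      have : triT (m + 2) (Fin.last (m + 1)) (Fin.castSucc (Fin.castSucc j)) = 0 := by
        have hj : (j : ℕ) < m := j.isLt
        simp only [triT, Matrix.of_apply, Fin.coe_castSucc, Fin.val_last]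
        exact tfun_zero (by omega) (by omega) (by omega)
      rw [this, mul_zero, zero_mul]
    rw [Finset.sum_eq_zero (fun j _ => hz j), zero_add]
    -- last term : column m+1
    have hlast : triT (m + 2) (Fin.last (m + 1)) (Fin.last (m + 1)) = X := by
      simp only [triT, Matrix.of_apply, Fin.val_last]
      exact tfun_self _
    have hsub1 : (triT (m + 2)).submatrix Fin.castSucc Fin.castSucc = triT (m + 1) := by
      ext i k
      simp [triT, Matrix.submatrix_apply]
    -- the term with column m
    have hdown : triT (m + 2) (Fin.last (m + 1)) (Fin.castSucc (Fin.last m)) = 1 := by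
      simp only [triT, Matrix.of_apply, Fin.coe_castSucc, Fin.val_last]
      exact tfun_down _
    have hminor : ((triT (m + 2)).submatrix (Fin.last (m + 1)).succAbove
        (Fin.castSucc (Fin.last m)).succAbove).det = (triT m).det := by
      set B := (triT (m + 2)).submatrix (Fin.last (m + 1)).succAbove
        (Fin.castSucc (Fin.last m)).succAbove with hB
      have hcol : ∀ i : Fin (m + 1), B i (Fin.last m) = if i = Fin.last m then 1 else 0 := by
        intro i
        have hcv : (((Fin.castSucc (Fin.last m)).succAbove (Fin.last m) : Fin (m + 2)) : ℕ)
            = m + 1 := by rw [val_succAbove]; simp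
        have hrv : (((Fin.last (m + 1)).succAbove i : Fin (m + 2)) : ℕ) = (i : ℕ) := by
          rw [val_succAbove]; simp [i.isLt]
        simp only [hB, Matrix.submatrix_apply, triT, Matrix.of_apply, hcv, hrv]
        by_cases hi : i = Fin.last m
        · rw [if_pos hi, hi, Fin.val_last]
          exact tfun_up _
        · rw [if_neg hi]
          have : (i : ℕ) < m := by
            have := i.isLt; rcases Nat.lt_succ_iff_lt_or_eq.mp this with h | h
            · exact h
            · exact absurd (Fin.ext h) hi
          exact tfun_zero (by omega) (by omega) (by omega)
      rw [det_unit_last_col B hcol]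
      congr 1
      ext i k
      have hrv : (((Fin.last (m + 1)).succAbove (Fin.castSucc i) : Fin (m + 2)) : ℕ)
          = (i : ℕ) := by rw [val_succAbove]; simp
      have hcv : (((Fin.castSucc (Fin.last m)).succAbove (Fin.castSucc k) : Fin (m + 2)) : ℕ)
          = (k : ℕ) := by rw [val_succAbove]; simp [k.isLt]
      simp only [Matrix.submatrix_apply, hB, triT, Matrix.of_apply, hrv, hcv]
    rw [hlast, hdown, hminor, Fin.succAbove_last, hsub1]
    have e1 : (-1 : Polynomial ℤ) ^ ((Fin.last (m+1) : ℕ) + ((Fin.last (m+1) : Fin (m+2)) : ℕ))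
        = 1 := by
      rw [Fin.val_last, ← two_mul, pow_mul]; norm_num
    have e2 : (-1 : Polynomial ℤ) ^ ((Fin.last (m+1) : ℕ)
        + ((Fin.castSucc (Fin.last m) : Fin (m+2)) : ℕ)) = -1 := by
      rw [Fin.val_last, Fin.coe_castSucc, Fin.val_last]
      rw [show m + 1 + m = 2 * m + 1 by ring, pow_succ, pow_mul]
      norm_num
    rw [e1, e2]
    ring
  intro m
  induction m using Nat.twoStepInduction with
  | zero => simp [delta, Matrix.det_fin_zero]
  | one =>
      rw [Matrix.det_fin_one]
      simp [triT, delta, tfun_self]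
  | more n ih1 ih2 =>
      rw [key n, ih1, ih2]
      simp [delta]

lemma detL (m : ℕ) : (lowL m).det = 1 := by
  have htri : (lowL m).BlockTriangular OrderDual.toDual := by
    intro i j hij
    have : (i : ℕ) < (j : ℕ) := hij
    exact motz_gt (i : ℕ) (by exact_mod_cast this)
  rw [Matrix.det_of_lowerTriangular (lowL m) htri]
  apply Finset.prod_eq_one
  intro i _
  simpa [lowL] using motz_diag (i : ℕ)

lemma detBhat (m : ℕ) : (bhat m).det = delta m := by
  rw [bhat_eq, Matrix.det_mul, detL, one_mul, detT]

noncomputable def dd (n : ℕ) : Polynomial ℤ :=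
  Matrix.det (Matrix.of fun i j : Fin n => motzkinPoly (2 + (i : ℕ) + (j : ℕ)) 0)

lemma dd_zero : dd 0 = 1 := Matrix.det_fin_zero

lemma hankel_rec (n : ℕ) : dd (n + 1) = dd n + delta (n + 1) ^ 2 := by
  set G := bhat (n + 1) * (bhat (n + 1))ᵀ with hG
  have Gentry : ∀ i j : Fin (n + 1), (j : ℕ) < n →
      G i j = motzkinPoly (2 + (i : ℕ) + (j : ℕ)) 0 := by
    intro i j hj
    rw [hG, Matrix.mul_apply]
    simp only [bhat, Matrix.of_apply, Matrix.transpose_apply]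
    rw [Fin.sum_univ_eq_sum_range
      (fun k => motzkinPoly (i + 1) (k : ℤ) * motzkinPoly (j + 1) (k : ℤ)) (n + 1)]
    rw [motz_conv (j + 1) (i + 1) (n + 1) (by omega)]
    congr 1
    omega
  have Gsymm : ∀ i j : Fin (n + 1), G i j = G j i := by
    intro i j
    rw [hG, Matrix.mul_apply, Matrix.mul_apply]
    simp only [bhat, Matrix.of_apply, Matrix.transpose_apply]
    apply Finset.sum_congr rfl
    intro k _
    ring
  have corner : G (Fin.last n) (Fin.last n) + 1
      = motzkinPoly (2 + (Fin.last n : ℕ) + (Fin.last n : ℕ)) 0 := by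
    rw [hG, Matrix.mul_apply]
    simp only [bhat, Matrix.of_apply, Matrix.transpose_apply, Fin.val_last]
    rw [Fin.sum_univ_eq_sum_range
      (fun k => motzkinPoly (n + 1) (k : ℤ) * motzkinPoly (n + 1) (k : ℤ)) (n + 1)]
    have h2 : ∑ k ∈ Finset.range (n + 2), motzkinPoly (n + 1) (k : ℤ) * motzkinPoly (n + 1) k
        = motzkinPoly ((n + 1) + (n + 1)) 0 := motz_conv (n + 1) (n + 1) (n + 2) (by omega)
    rw [Finset.sum_range_succ] at h2
    have hd : motzkinPoly (n + 1) ((n + 1 : ℕ) : ℤ) = 1 := motz_diag (n + 1)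
    rw [hd, mul_one] at h2
    rw [h2]
    congr 1
    omega
  have hmat : (Matrix.of fun i j : Fin (n + 1) =>
        motzkinPoly (2 + (i : ℕ) + (j : ℕ)) 0)
      = Matrix.updateRow G (Fin.last n)
          (G (Fin.last n) + Pi.single (Fin.last n) 1) := by
    ext i j
    by_cases hi : i = Fin.last n
    · subst hi
      rw [Matrix.updateRow_self]
      by_cases hj : j = Fin.last n
      · subst hj
        simp only [Pi.add_apply, Pi.single_eq_same, Matrix.of_apply]
        rw [← corner]
      · have hjn : (j : ℕ) < n := by
          have := j.isLt
          rcases Nat.lt_succ_iff_lt_or_eq.mp this with h | h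
          · exact h
          · exact absurd (Fin.ext h) hj
        simp only [Pi.add_apply, Pi.single_eq_of_ne hj, Matrix.of_apply, add_zero]
        rw [Gentry _ _ hjn]
    · rw [Matrix.updateRow_ne hi]
      have hin : (i : ℕ) < n := by
        have := i.isLt
        rcases Nat.lt_succ_iff_lt_or_eq.mp this with h | h
        · exact h
        · exact absurd (Fin.ext h) hi
      simp only [Matrix.of_apply]
      rw [Gsymm, Gentry _ _ hin,
        show 2 + (j : ℕ) + (i : ℕ) = 2 + (i : ℕ) + (j : ℕ) from by omega]
  have hdet : dd (n + 1) = G.det + (Matrix.updateRow G (Fin.last n)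
      (Pi.single (Fin.last n) 1)).det := by
    rw [dd, hmat, Matrix.det_updateRow_add G (Fin.last n) (G (Fin.last n))
      (Pi.single (Fin.last n) 1), Matrix.updateRow_eq_self]
  have hdetG : G.det = delta (n + 1) ^ 2 := by
    rw [hG, Matrix.det_mul, Matrix.det_transpose, detBhat]
    ring
  have hunit : (Matrix.updateRow G (Fin.last n) (Pi.single (Fin.last n) 1)).det = dd n := by
    set U := Matrix.updateRow G (Fin.last n) (Pi.single (Fin.last n) 1) with hU
    have h1 : ∀ j, U (Fin.last n) j = if j = Fin.last n then 1 else 0 := by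
      intro j
      rw [hU, Matrix.updateRow_self]
      simp [Pi.single_apply]
    rw [det_unit_last_row U h1]
    congr 1
    ext i j
    rw [hU, Matrix.submatrix_apply, Matrix.updateRow_ne (Fin.ne_of_lt (Fin.castSucc_lt_last i))]
    rw [Gsymm, Gentry _ _ (by simpa using i.isLt)]
    simp only [Matrix.of_apply, Fin.coe_castSucc]
    rw [show 2 + (j : ℕ) + (i : ℕ) = 2 + (i : ℕ) + (j : ℕ) from by omega]
  rw [hdet, hdetG, hunit]
  ring


/-- The generating function of `d_2(n,t) = det(M_{2+i+j}(t))` satisfies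
`(1-x)^2 (1-(t^2-2)x+x^2) · D_2(x,t) = 1 + x` in `(ℤ[t])[[x]]`. -/
theorem genfun_hankel_det_shift_two :
    ((1 - PowerSeries.X) ^ 2 *
        (1 - PowerSeries.C (X ^ 2 - 2 : Polynomial ℤ) * PowerSeries.X +
          PowerSeries.X ^ 2)) *
      PowerSeries.mk (fun n =>
        Matrix.det (Matrix.of fun i j : Fin n => motzkinPoly (2 + (i : ℕ) + (j : ℕ)) 0)) =
      1 + PowerSeries.X := by
  have hmk : PowerSeries.mk (fun n =>
      Matrix.det (Matrix.of fun i j : Fin n => motzkinPoly (2 + (i : ℕ) + (j : ℕ)) 0))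
      = PowerSeries.mk dd := rfl
  rw [hmk]
  have hC2 : PowerSeries.C (X ^ 2 - 2 : Polynomial ℤ)
      = PowerSeries.C (X ^ 2 : Polynomial ℤ) - 2 := by
    rw [map_sub, map_ofNat]
  have hP : (1 - PowerSeries.X) ^ 2 *
        (1 - PowerSeries.C (X ^ 2 - 2 : Polynomial ℤ) * PowerSeries.X + PowerSeries.X ^ 2)
      = 1 - PowerSeries.C (X ^ 2 : Polynomial ℤ) * PowerSeries.X
          + PowerSeries.C (2 * X ^ 2 - 2 : Polynomial ℤ) * PowerSeries.X ^ 2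
          - PowerSeries.C (X ^ 2 : Polynomial ℤ) * PowerSeries.X ^ 3
          + PowerSeries.X ^ 4 := by
    have h2 : PowerSeries.C (2 * X ^ 2 - 2 : Polynomial ℤ)
        = 2 * PowerSeries.C (X ^ 2 : Polynomial ℤ) - 2 := by
      rw [map_sub, _root_.map_mul, map_ofNat]
    rw [hC2, h2]
    ring
  rw [hP]
  have hsplit : (1 - PowerSeries.C (X ^ 2 : Polynomial ℤ) * PowerSeries.X
          + PowerSeries.C (2 * X ^ 2 - 2 : Polynomial ℤ) * PowerSeries.X ^ 2
          - PowerSeries.C (X ^ 2 : Polynomial ℤ) * PowerSeries.X ^ 3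
          + PowerSeries.X ^ 4) * PowerSeries.mk dd
      = PowerSeries.mk dd
        - PowerSeries.C (X ^ 2 : Polynomial ℤ) * (PowerSeries.X ^ 1 * PowerSeries.mk dd)
        + PowerSeries.C (2 * X ^ 2 - 2 : Polynomial ℤ) * (PowerSeries.X ^ 2 * PowerSeries.mk dd)
        - PowerSeries.C (X ^ 2 : Polynomial ℤ) * (PowerSeries.X ^ 3 * PowerSeries.mk dd)
        + PowerSeries.X ^ 4 * PowerSeries.mk dd := by
    ring
  rw [hsplit]
  have delta_rec : ∀ n, delta (n + 2) = X * delta (n + 1) - delta n := fun n => rfl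
  have delta_zero : delta 0 = 1 := rfl
  have delta_one : delta 1 = X := rfl
  refine PowerSeries.ext fun n => ?_
  set c2 : Polynomial ℤ := 2 * X ^ 2 - 2 with hc2
  simp only [map_add, map_sub, PowerSeries.coeff_C_mul, PowerSeries.coeff_X_pow_mul',
    PowerSeries.coeff_mk, PowerSeries.coeff_one, PowerSeries.coeff_X]
  match n with
  | 0 =>
      norm_num [dd_zero]
  | 1 =>
      norm_num [hankel_rec 0, dd_zero, delta_one]
  | 2 =>
      norm_num [hankel_rec 1, hankel_rec 0, dd_zero]
      rw [show delta 2 = X * delta 1 - delta 0 from delta_rec 0, delta_one, delta_zero, hc2]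
      ring
  | 3 =>
      norm_num [hankel_rec 2, hankel_rec 1, hankel_rec 0, dd_zero]
      rw [show delta 3 = X * delta 2 - delta 1 from delta_rec 1,
        show delta 2 = X * delta 1 - delta 0 from delta_rec 0, delta_one, delta_zero, hc2]
      ring
  | (m + 4) =>
      have e1 : 1 ≤ m + 4 := by omega
      have e2 : 2 ≤ m + 4 := by omega
      have e3 : 3 ≤ m + 4 := by omega
      have e4 : 4 ≤ m + 4 := by omega
      have e0 : ¬(m + 4 = 0) := by omega
      have e0' : ¬(m + 4 = 1) := by omega
      rw [if_pos e1, if_pos e2, if_pos e3, if_pos e4, if_neg e0, if_neg e0']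
      rw [show m + 4 - 1 = m + 3 from rfl, show m + 4 - 2 = m + 2 from rfl,
        show m + 4 - 3 = m + 1 from rfl, show m + 4 - 4 = m from rfl]
      have h4 : dd (m + 4) = dd (m + 3) + delta (m + 4) ^ 2 := hankel_rec (m + 3)
      have h3 : dd (m + 3) = dd (m + 2) + delta (m + 3) ^ 2 := hankel_rec (m + 2)
      have h2 : dd (m + 2) = dd (m + 1) + delta (m + 2) ^ 2 := hankel_rec (m + 1)
      have h1 : dd (m + 1) = dd m + delta (m + 1) ^ 2 := hankel_rec m
      have hd4 : delta (m + 4) = X * delta (m + 3) - delta (m + 2) := delta_rec (m + 2)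
      have hr : delta (m + 3) = X * delta (m + 2) - delta (m + 1) := delta_rec (m + 1)
      have hd1 : delta (m + 1) = X * delta (m + 2) - delta (m + 3) := by
        rw [hr]; ring
      rw [h4, h3, h2, h1, hd4, hd1, hc2]
      ring
end

section
/- For nonnegative integers k and n, the Hankel determinant d_0^{(k)}(n,t) = \det( M_{i+j,k}(t) )_{i,j=0}^{n-1} (with d_0^{(k)}(0,t) = 1) satisfies: d_0^{(k)}((k+1)n, t) = (-1)^{\binom{k+1}{2} n}, and d_0^{(k)}(n,t) = 0 whenever n is not divisible by k+1. -/
open Polynomial Finset Matrix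

lemma motzkin_zero (k : ℤ) : motzkinPoly 0 k = if k = 0 then 1 else 0 := by
  rw [motzkinPoly]

lemma motzkin_succ (n : ℕ) (k : ℤ) (h : ¬ k < 0) :
    motzkinPoly (n+1) k =
      motzkinPoly n (k - 1) + X * motzkinPoly n k + motzkinPoly n (k + 1) := by
  rw [motzkinPoly, if_neg h]

lemma motzkin_neg : ∀ (n : ℕ) (k : ℤ), k < 0 → motzkinPoly n k = 0 := by
  intro n k h
  cases n with
  | zero => rw [motzkin_zero, if_neg (by omega)]
  | succ n => rw [motzkinPoly, if_pos h]

lemma motzkin_gt : ∀ (n : ℕ) (k : ℤ), (n : ℤ) < k → motzkinPoly n k = 0 := by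
  intro n
  induction n with
  | zero => intro k h; rw [motzkin_zero, if_neg (by omega)]
  | succ n ih =>
    intro k h
    rw [motzkin_succ n k (by omega), ih (k-1) (by push_cast; omega),
      ih k (by push_cast at h ⊢; omega), ih (k+1) (by push_cast at h ⊢; omega)]
    ring

lemma motzkin_diag : ∀ (n : ℕ), motzkinPoly n (n : ℤ) = 1 := by
  intro n
  induction n with
  | zero => rw [motzkin_zero]; norm_num
  | succ n ih =>
    have h1 : ((n+1:ℕ):ℤ) = (n:ℤ)+1 := by push_cast; ring
    rw [motzkin_succ n ((n+1:ℕ):ℤ) (by omega), h1]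
    rw [motzkin_gt n ((n:ℤ)+1+1) (by omega), motzkin_gt n ((n:ℤ)+1) (by omega)]
    simpa using ih

def Gfun (k : ℕ) (a b : ℤ) : ℤ :=
  if 0 ≤ a ∧ 0 ≤ b ∧ (k : ℤ) ≤ a + b ∧ a - b ≤ k ∧ b - a ≤ k ∧ (2 : ℤ) ∣ (a + b - k)
  then 1 else 0

lemma Gfun_comm (k : ℕ) (a b : ℤ) (ha : 0 ≤ a) (hb : 0 ≤ b) :
    Gfun k (a-1) b + Gfun k (a+1) b = Gfun k a (b-1) + Gfun k a (b+1) := by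
  unfold Gfun
  split_ifs <;> omega

lemma Gfun_a0 (k : ℕ) (a : ℤ) (ha : 0 ≤ a) :
    Gfun k a 0 = if a = k then 1 else 0 := by
  unfold Gfun
  split_ifs <;> omega

lemma Gfun_negb (k : ℕ) (a b : ℤ) (hb : b < 0) : Gfun k a b = 0 := by
  unfold Gfun; rw [if_neg]; omega

lemma Gfun_nega (k : ℕ) (a b : ℤ) (ha : a < 0) : Gfun k a b = 0 := by
  unfold Gfun; rw [if_neg]; omega

/-- generic shift lemma -/
lemma sum_shift {R : Type*} [AddCommGroup R] (F : ℕ → R) (N : ℕ)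
    (h0 : F 0 = 0) (hN : F N = 0) :
    ∑ x ∈ range N, F (x+1) = ∑ x ∈ range N, F x := by
  have h1 := Finset.sum_range_succ' F N
  have h2 := Finset.sum_range_succ F N
  rw [h2] at h1
  rw [h0, hN, add_zero, add_zero] at h1
  exact h1.symm

/-- collapse a sum of a single-point indicator over `Fin n`, ℤ-indexed -/
lemma sum_if_int {R : Type*} [AddCommMonoid R] {n : ℕ} (f : Fin n → R) (m : ℤ)
    (hm : 0 ≤ m ∧ m < n) :
    ∑ c : Fin n, (if (c : ℤ) = m then f c else 0) = f ⟨m.toNat, by omega⟩ := by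
  rw [Finset.sum_eq_single (⟨m.toNat, by omega⟩ : Fin n)]
  · rw [if_pos]; simp; omega
  · intro b _ hb
    rw [if_neg]
    intro h; apply hb; apply Fin.ext; simp [← h]
  · intro h; exact absurd (Finset.mem_univ _) h

lemma sum_if_int_zero {R : Type*} [AddCommMonoid R] {n : ℕ} (f : Fin n → R) (m : ℤ)
    (hm : m < 0 ∨ (n:ℤ) ≤ m) :
    ∑ c : Fin n, (if (c : ℤ) = m then f c else 0) = 0 := by
  apply Finset.sum_eq_zero
  intro c _
  rw [if_neg]
  have := c.isLt
  omega

-- chunk 2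
noncomputable def hzf (k N j : ℕ) (α : ℤ) : Polynomial ℤ :=
  ∑ b ∈ range N, ((Gfun k α b : ℤ) : Polynomial ℤ) * motzkinPoly j b

noncomputable def Sconv (k N i j : ℕ) : Polynomial ℤ :=
  ∑ a ∈ range N, motzkinPoly i a * hzf k N j a

lemma hzf_neg (k N j : ℕ) (α : ℤ) (h : α < 0) : hzf k N j α = 0 := by
  apply Finset.sum_eq_zero
  intro b _
  rw [Gfun_nega k α b h]
  simp

lemma hzf_step (k N j : ℕ) (hj : j + 1 < N) (α : ℤ) (hα : 0 ≤ α) :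
    hzf k N (j+1) α = hzf k N j (α+1) + hzf k N j (α-1) + X * hzf k N j α := by
  unfold hzf
  have e1 : ∀ b ∈ range N, ((Gfun k α b : ℤ) : Polynomial ℤ) * motzkinPoly (j+1) b
      = ((Gfun k α b : ℤ) : Polynomial ℤ) * motzkinPoly j ((b:ℤ)-1)
        + (((Gfun k α b : ℤ) : Polynomial ℤ) * motzkinPoly j ((b:ℤ)+1)
        + X * (((Gfun k α b : ℤ) : Polynomial ℤ) * motzkinPoly j b)) := by
    intro b _
    rw [motzkin_succ j b (by omega)]
    ring
  rw [Finset.sum_congr rfl e1, Finset.sum_add_distrib, Finset.sum_add_distrib, ← Finset.mul_sum]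
  have hS1 : ∑ b ∈ range N, ((Gfun k α b : ℤ) : Polynomial ℤ) * motzkinPoly j ((b:ℤ)-1)
      = ∑ b ∈ range N, ((Gfun k α ((b:ℤ)+1) : ℤ) : Polynomial ℤ) * motzkinPoly j b := by
    have h := sum_shift (fun b => ((Gfun k α b : ℤ) : Polynomial ℤ) * motzkinPoly j ((b:ℤ)-1)) N
      (by simp only [Nat.cast_zero]; rw [motzkin_neg j (0-1 : ℤ) (by norm_num), mul_zero])
      (by rw [motzkin_gt j ((N:ℤ)-1) (by push_cast; omega), mul_zero])
    rw [← h]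
    apply Finset.sum_congr rfl
    intro b _
    push_cast
    ring_nf
  have hS3 : ∑ b ∈ range N, ((Gfun k α b : ℤ) : Polynomial ℤ) * motzkinPoly j ((b:ℤ)+1)
      = ∑ b ∈ range N, ((Gfun k α ((b:ℤ)-1) : ℤ) : Polynomial ℤ) * motzkinPoly j b := by
    have h := sum_shift (fun b => ((Gfun k α ((b:ℤ)-1) : ℤ) : Polynomial ℤ) * motzkinPoly j b) N
      (by simp only [Nat.cast_zero]; rw [Gfun_negb k α (0-1 : ℤ) (by norm_num)]; simp)
      (by rw [motzkin_gt j (N:ℤ) (by push_cast; omega), mul_zero])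
    rw [← h]
    apply Finset.sum_congr rfl
    intro b _
    push_cast
    ring_nf
  rw [hS1, hS3]
  have key : ∑ b ∈ range N, ((Gfun k α ((b:ℤ)+1) : ℤ) : Polynomial ℤ) * motzkinPoly j b
      + ∑ b ∈ range N, ((Gfun k α ((b:ℤ)-1) : ℤ) : Polynomial ℤ) * motzkinPoly j b
      = ∑ b ∈ range N, ((Gfun k (α+1) b : ℤ) : Polynomial ℤ) * motzkinPoly j b
      + ∑ b ∈ range N, ((Gfun k (α-1) b : ℤ) : Polynomial ℤ) * motzkinPoly j b := by
    rw [← Finset.sum_add_distrib, ← Finset.sum_add_distrib]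
    apply Finset.sum_congr rfl
    intro b _
    have hc := Gfun_comm k α (b:ℤ) hα (by omega)
    have e : (Gfun k α ((b:ℤ)+1) + Gfun k α ((b:ℤ)-1) : ℤ)
        = (Gfun k (α+1) (b:ℤ) + Gfun k (α-1) (b:ℤ) : ℤ) := by omega
    have e2 : ((Gfun k α ((b:ℤ)+1) : ℤ) : Polynomial ℤ) + ((Gfun k α ((b:ℤ)-1) : ℤ) : Polynomial ℤ)
        = ((Gfun k (α+1) (b:ℤ) : ℤ) : Polynomial ℤ) + ((Gfun k (α-1) (b:ℤ) : ℤ) : Polynomial ℤ) := by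
      have := congrArg (fun z : ℤ => ((z : ℤ) : Polynomial ℤ)) e
      push_cast at this
      exact this
    rw [← add_mul, ← add_mul, e2]
  linear_combination key

lemma Sconv_step (k N i j : ℕ) (hi : i + 1 < N) (hj : j + 1 < N) :
    Sconv k N i (j+1) = Sconv k N (i+1) j := by
  unfold Sconv
  have e1 : ∀ a ∈ range N, motzkinPoly i a * hzf k N (j+1) a
      = motzkinPoly i a * hzf k N j ((a:ℤ)+1)
        + (motzkinPoly i a * hzf k N j ((a:ℤ)-1)
        + X * (motzkinPoly i a * hzf k N j a)) := by
    intro a _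
    rw [hzf_step k N j hj a (by omega)]
    ring
  rw [Finset.sum_congr rfl e1, Finset.sum_add_distrib, Finset.sum_add_distrib, ← Finset.mul_sum]
  have hP1 : ∑ a ∈ range N, motzkinPoly i a * hzf k N j ((a:ℤ)+1)
      = ∑ a ∈ range N, motzkinPoly i ((a:ℤ)-1) * hzf k N j a := by
    have h := sum_shift (fun a => motzkinPoly i ((a:ℤ)-1) * hzf k N j a) N
      (by simp only [Nat.cast_zero]; rw [motzkin_neg i (0-1 : ℤ) (by norm_num), zero_mul])
      (by rw [motzkin_gt i ((N:ℤ)-1) (by push_cast; omega), zero_mul])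
    rw [← h]
    apply Finset.sum_congr rfl
    intro a _
    push_cast
    ring_nf
  have hP2 : ∑ a ∈ range N, motzkinPoly i a * hzf k N j ((a:ℤ)-1)
      = ∑ a ∈ range N, motzkinPoly i ((a:ℤ)+1) * hzf k N j a := by
    have h := sum_shift (fun a => motzkinPoly i a * hzf k N j ((a:ℤ)-1)) N
      (by simp only [Nat.cast_zero]; rw [hzf_neg k N j (0-1 : ℤ) (by norm_num), mul_zero])
      (by rw [motzkin_gt i (N:ℤ) (by push_cast; omega), zero_mul])
    rw [← h]
    apply Finset.sum_congr rfl
    intro a _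
    push_cast
    ring_nf
  rw [hP1, hP2]
  have comb : ∀ a ∈ range N,
      motzkinPoly i ((a:ℤ)-1) * hzf k N j a
        + motzkinPoly i ((a:ℤ)+1) * hzf k N j a
        + X * (motzkinPoly i a * hzf k N j a)
      = motzkinPoly (i+1) a * hzf k N j a := by
    intro a _
    rw [motzkin_succ i a (by omega)]
    ring
  have := Finset.sum_congr rfl comb
  rw [← this, Finset.sum_add_distrib, Finset.sum_add_distrib, ← Finset.mul_sum]
  ring

lemma Sconv_base (k N i : ℕ) (hi : i < N) : Sconv k N i 0 = motzkinPoly i k := by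
  unfold Sconv
  have hz0 : ∀ a : ℕ, hzf k N 0 a = ((Gfun k a 0 : ℤ) : Polynomial ℤ) := by
    intro a
    unfold hzf
    rw [Finset.sum_eq_single_of_mem 0 (Finset.mem_range.2 (by omega))]
    · rw [Nat.cast_zero, motzkin_zero, if_pos rfl, mul_one]
    · intro b _ hb
      rw [motzkin_zero, if_neg (by exact_mod_cast hb), mul_zero]
  have e1 : ∀ a ∈ range N, motzkinPoly i a * hzf k N 0 a
      = if (a : ℕ) = k then motzkinPoly i a else 0 := by
    intro a _
    rw [hz0 a, Gfun_a0 k a (by omega)]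
    by_cases h : (a : ℕ) = k
    · rw [if_pos (by exact_mod_cast h), if_pos h]
      simp
    · rw [if_neg (by exact_mod_cast h), if_neg h]
      simp
  rw [Finset.sum_congr rfl e1]
  by_cases hk : k < N
  · rw [Finset.sum_eq_single_of_mem k (Finset.mem_range.2 hk)]
    · rw [if_pos rfl]
    · intro b _ hb
      rw [if_neg hb]
  · rw [Finset.sum_eq_zero, motzkin_gt i k (by omega)]
    intro b hb
    rw [if_neg (by simp at hb; omega)]

lemma Sconv_eq (k N : ℕ) : ∀ j i, i + j < N → motzkinPoly (i+j) k = Sconv k N i j := by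
  intro j
  induction j with
  | zero => intro i hi; rw [Nat.add_zero, Sconv_base k N i (by omega)]
  | succ j ih =>
    intro i hi
    rw [show i + (j+1) = (i+1) + j from by omega, ih (i+1) (by omega),
      ← Sconv_step k N i j (by omega) (by omega)]

lemma hzf_trunc (k : ℕ) {N N' j : ℕ} (h : N ≤ N') (hj : j < N) (α : ℤ) :
    hzf k N' j α = hzf k N j α := by
  unfold hzf
  rw [← Finset.sum_subset (Finset.range_subset_range.2 h)]
  intro b hb hbn
  rw [motzkin_gt j b (by simp at hb hbn ⊢; omega), mul_zero]

lemma Sconv_trunc (k : ℕ) {N N' i j : ℕ} (h : N ≤ N') (hi : i < N) (hj : j < N) :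
    Sconv k N' i j = Sconv k N i j := by
  unfold Sconv
  have e1 : ∀ a ∈ range N', motzkinPoly i a * hzf k N' j a
      = motzkinPoly i a * hzf k N j a := by
    intro a _
    rw [hzf_trunc k h hj]
  rw [Finset.sum_congr rfl e1, ← Finset.sum_subset (Finset.range_subset_range.2 h)]
  intro a ha han
  rw [motzkin_gt i a (by simp at ha han ⊢; omega), zero_mul]

lemma conv_final (k n i j : ℕ) (hi : i < n) (hj : j < n) :
    motzkinPoly (i+j) k = Sconv k n i j := by
  rcases le_or_gt n (i+j) with h | h
  · rw [Sconv_eq k (i+j+1) j i (by omega), Sconv_trunc k (le_of_lt (by omega) : n ≤ i+j+1) hi hj]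
  · exact Sconv_eq k n j i h

-- chunk 3
def Bent (k : ℕ) (a b : ℤ) : ℤ :=
  (if b = a + k then 1 else 0) + (if b = k - a ∧ 0 < a then 1 else 0)
    - (if b = a - k - 2 then 1 else 0)

lemma Bent_eq (k : ℕ) (a b : ℤ) (ha : 0 ≤ a) (hb : 0 ≤ b) :
    Bent k a b = Gfun k a b - Gfun k (a-2) b := by
  unfold Bent Gfun
  split_ifs <;> omega

def Bzmat (k n : ℕ) : Matrix (Fin n) (Fin n) ℤ :=
  Matrix.of fun a b => Bent k a b

def Gzmat (k n : ℕ) : Matrix (Fin n) (Fin n) ℤ :=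
  Matrix.of fun a b => Gfun k a b

noncomputable def Amat (n : ℕ) : Matrix (Fin n) (Fin n) (Polynomial ℤ) :=
  Matrix.of fun i a => motzkinPoly i a

lemma Amat_det (n : ℕ) : (Amat n).det = 1 := by
  rw [Matrix.det_of_lowerTriangular (Amat n)]
  · rw [Finset.prod_eq_one]
    intro i _
    exact motzkin_diag i
  · intro i j h
    have : (i : ℕ) < (j : ℕ) := h
    exact motzkin_gt i j (by exact_mod_cast this)

lemma Hmat_eq (k n : ℕ) :
    (Matrix.of fun i j : Fin n => motzkinPoly ((i : ℕ) + (j : ℕ)) (k : ℤ))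
      = Amat n * ((Gzmat k n).map (Int.castRingHom (Polynomial ℤ))) * (Amat n)ᵀ := by
  refine Matrix.ext fun i j => ?_
  rw [Matrix.of_apply, conv_final k n i j i.isLt j.isLt]
  unfold Sconv hzf
  rw [Finset.sum_range fun a => motzkinPoly i a * _]
  trans ∑ a : Fin n, ∑ b : Fin n,
    motzkinPoly i a * (((Gfun k (a:ℕ) (b:ℕ) : ℤ) : Polynomial ℤ) * motzkinPoly j b)
  · apply Finset.sum_congr rfl
    intro a _
    rw [Finset.sum_range fun b => ((Gfun k a b : ℤ) : Polynomial ℤ) * motzkinPoly j b,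
      Finset.mul_sum]
  · rw [Finset.sum_comm]
    simp only [Matrix.mul_apply, Finset.sum_mul]
    apply Finset.sum_congr rfl
    intro b _
    apply Finset.sum_congr rfl
    intro a _
    simp only [Amat, Gzmat, Matrix.of_apply, Matrix.map_apply, Matrix.transpose_apply,
      Int.coe_castRingHom]
    push_cast
    ring

lemma E0_step (k n : ℕ) : Bzmat k n = (Matrix.of fun a c : Fin n =>
    (if (c:ℤ) = (a:ℤ) then 1 else 0) + (if (c:ℤ) = (a:ℤ) - 2 then -1 else 0)) * Gzmat k n := by
  ext a b
  rw [Matrix.mul_apply]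
  have e1 : ∀ c : Fin n, (Matrix.of fun a c : Fin n =>
      (if (c:ℤ) = (a:ℤ) then (1:ℤ) else 0) + (if (c:ℤ) = (a:ℤ) - 2 then -1 else 0)) a c
        * Gzmat k n c b
      = (if (c:ℤ) = (a:ℤ) then Gfun k c b else 0)
        + (if (c:ℤ) = (a:ℤ) - 2 then -Gfun k c b else 0) := by
    intro c
    simp only [Matrix.of_apply, Gzmat]
    split_ifs <;> ring
  rw [Finset.sum_congr rfl (fun c _ => e1 c), Finset.sum_add_distrib,
    sum_if_int (fun c : Fin n => Gfun k c b) (a:ℤ) ⟨by omega, by exact_mod_cast a.isLt⟩]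
  rw [Bzmat, Matrix.of_apply, Bent_eq k a b (by omega) (by omega)]
  by_cases h2 : 2 ≤ (a : ℕ)
  · rw [sum_if_int (fun c : Fin n => -Gfun k c b) ((a:ℤ) - 2)
      ⟨by omega, by have := a.isLt; omega⟩]
    have hv : ((((a:ℤ) - 2).toNat : ℕ) : ℤ) = (a:ℤ) - 2 := by omega
    simp only [hv, Int.toNat_natCast]
    ring
  · rw [sum_if_int_zero (fun c : Fin n => -Gfun k c b) ((a:ℤ) - 2) (by left; omega),
      Gfun_nega k ((a:ℤ)-2) b (by omega)]
    simp only [Int.toNat_natCast]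
    ring

lemma detH_eq_detB (k n : ℕ) :
    (Matrix.of fun i j : Fin n => motzkinPoly ((i : ℕ) + (j : ℕ)) (k : ℤ)).det
      = (((Bzmat k n).det : ℤ) : Polynomial ℤ) := by
  rw [Hmat_eq k n, Matrix.det_mul, Matrix.det_mul, Amat_det, Matrix.det_transpose, Amat_det,
    one_mul, mul_one]
  have hmap : ((Gzmat k n).map (Int.castRingHom (Polynomial ℤ))).det
      = (((Gzmat k n).det : ℤ) : Polynomial ℤ) := by
    rw [show (Gzmat k n).map ⇑(Int.castRingHom (Polynomial ℤ))
        = (Int.castRingHom (Polynomial ℤ)).mapMatrix (Gzmat k n) from rfl, ← RingHom.map_det]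
    rfl
  rw [hmap]
  have : (Bzmat k n).det = (Gzmat k n).det := by
    rw [E0_step k n, Matrix.det_mul]
    have hE : (Matrix.of fun a c : Fin n =>
        (if (c:ℤ) = (a:ℤ) then (1:ℤ) else 0) + (if (c:ℤ) = (a:ℤ) - 2 then -1 else 0)).det = 1 := by
      rw [Matrix.det_of_lowerTriangular]
      · rw [Finset.prod_eq_one]
        intro i _
        simp only [Matrix.of_apply]
        rw [if_neg (show ¬((i:ℤ) = (i:ℤ) - 2) by omega)]
        simp
      · intro i j h
        have hij : (i : ℕ) < (j : ℕ) := h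
        simp only [Matrix.of_apply]
        rw [if_neg (by omega), if_neg (by omega)]
        ring
    rw [hE, one_mul]
  rw [this]

-- chunk 4 : divisible case
lemma det_rev : ∀ m : ℕ,
    (Matrix.of fun i j : Fin m => if (i:ℕ) + (j:ℕ) + 1 = m then (1:ℤ) else 0).det
      = (-1)^(m.choose 2) := by
  intro m
  induction m with
  | zero => simp
  | succ m ih =>
    rw [Matrix.det_succ_row_zero]
    rw [Finset.sum_eq_single_of_mem (Fin.last m) (Finset.mem_univ _)]
    · have h1 : (Matrix.of fun i j : Fin (m+1) =>
          if (i:ℕ) + (j:ℕ) + 1 = m + 1 then (1:ℤ) else 0) 0 (Fin.last m) = 1 := by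
        simp only [Matrix.of_apply, Fin.val_zero, Fin.val_last]
        exact if_pos (by omega)
      rw [h1, Fin.succAbove_last]
      have h2 : ((Matrix.of fun i j : Fin (m+1) =>
          if (i:ℕ) + (j:ℕ) + 1 = m + 1 then (1:ℤ) else 0).submatrix Fin.succ Fin.castSucc)
          = (Matrix.of fun i j : Fin m => if (i:ℕ) + (j:ℕ) + 1 = m then (1:ℤ) else 0) := by
        refine Matrix.ext fun i j => ?_
        simp only [Matrix.submatrix_apply, Matrix.of_apply, Fin.val_succ, Fin.coe_castSucc]
        split_ifs <;> omega
      rw [h2, ih, Fin.val_last]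
      have h3 : (m+1).choose 2 = m.choose 2 + m := by
        rw [Nat.choose_succ_succ, Nat.choose_one_right, Nat.add_comm]
      rw [h3, pow_add]
      ring
    · intro j _ hj
      have : (Matrix.of fun i j : Fin (m+1) =>
          if (i:ℕ) + (j:ℕ) + 1 = m + 1 then (1:ℤ) else 0) 0 j = 0 := by
        simp only [Matrix.of_apply, Fin.val_zero]
        exact if_neg (by
          intro hc
          apply hj
          apply Fin.ext
          rw [Fin.val_last]
          omega)
      rw [this]
      ring

lemma Bz_rev (k : ℕ) : Bzmat k (k+1)
    = (Matrix.of fun i j : Fin (k+1) => if (i:ℕ) + (j:ℕ) + 1 = k+1 then (1:ℤ) else 0) := by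
  refine Matrix.ext fun a b => ?_
  have ha := a.isLt
  have hb := b.isLt
  simp only [Bzmat, Matrix.of_apply, Bent]
  split_ifs <;> omega

def Dzmat (k : ℕ) : Matrix (Fin (2*k+2)) (Fin (2*k+2)) ℤ :=
  Matrix.of fun i j => (if (j:ℕ) = (i:ℕ) + k then (1:ℤ) else 0)
    - (if (i:ℕ) = (j:ℕ) + k + 2 then 1 else 0)

open Fin.NatCast in
lemma rot_pow (m : ℕ) (j : ℕ) (x : Fin (m+1)) :
    ((finRotate (m+1))^j) x = x + (j : Fin (m+1)) := by
  induction j generalizing x with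
  | zero => simp
  | succ j ih =>
    rw [pow_succ, Equiv.Perm.mul_apply, finRotate_succ_apply, ih (x+1)]
    have : ((j+1 : ℕ) : Fin (m+1)) = (j : Fin (m+1)) + 1 := by
      push_cast
      ring
    rw [this]
    abel

open Fin.NatCast in
lemma detD (k : ℕ) : (Dzmat k).det = 1 := by
  set σ : Equiv.Perm (Fin (2*k+2)) := (finRotate (2*k+2))^k with hσ
  have hval : ∀ i : Fin (2*k+2), ((σ i : ℕ))
      = if (i:ℕ) + k < 2*k+2 then (i:ℕ) + k else (i:ℕ) + k - (2*k+2) := by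
    intro i
    rw [hσ, rot_pow (2*k+1) k i]
    have h1 : ((i + (k : Fin (2*k+2)) : Fin (2*k+2)) : ℕ)
        = ((i:ℕ) + ((k : Fin (2*k+2)) : ℕ)) % (2*k+2) := by
      exact congrArg Fin.val (Fin.add_def i (k : Fin (2*k+2)))
    rw [h1, Fin.val_natCast, Nat.mod_eq_of_lt (show k < 2*k+2 by omega)]
    by_cases h : (i:ℕ) + k < 2*k+2
    · rw [if_pos h, Nat.mod_eq_of_lt h]
    · rw [if_neg h, Nat.mod_eq_sub_mod (by omega), Nat.mod_eq_of_lt (by have := i.isLt; omega)]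
  have hfact : Dzmat k = (σ.permMatrix ℤ) * Matrix.diagonal (fun j : Fin (2*k+2) =>
      if (j:ℕ) < k then (-1:ℤ) else 1) := by
    refine Matrix.ext fun i j => ?_
    rw [Matrix.mul_diagonal]
    have hpm : (σ.permMatrix ℤ) i j = if σ i = j then 1 else 0 := by
      simp [Equiv.Perm.permMatrix, PEquiv.toMatrix_apply, Equiv.toPEquiv_apply]
    rw [hpm]
    have hi := i.isLt
    have hj := j.isLt
    have hvi := hval i
    have hiff : (σ i = j) ↔ ((j:ℕ) = ((σ i) : ℕ)) := ⟨fun h => by rw [h], fun h => Fin.ext h.symm⟩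
    simp only [Dzmat, Matrix.of_apply]
    by_cases hik : (i:ℕ) + k < 2*k+2
    · rw [if_pos hik] at hvi
      by_cases hc : σ i = j
      · rw [if_pos hc]
        have hcv : (j:ℕ) = (i:ℕ) + k := by rw [← hvi]; exact hiff.mp hc
        split_ifs <;> omega
      · rw [if_neg hc]
        have hcv : (j:ℕ) ≠ (i:ℕ) + k := by rw [← hvi]; exact fun h => hc (hiff.mpr h)
        split_ifs <;> omega
    · rw [if_neg hik] at hvi
      by_cases hc : σ i = j
      · rw [if_pos hc]
        have hcv : (j:ℕ) = (i:ℕ) + k - (2*k+2) := by rw [← hvi]; exact hiff.mp hc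
        split_ifs <;> omega
      · rw [if_neg hc]
        have hcv : (j:ℕ) ≠ (i:ℕ) + k - (2*k+2) := by rw [← hvi]; exact fun h => hc (hiff.mpr h)
        split_ifs <;> omega
  rw [hfact, Matrix.det_mul, Matrix.det_permutation, Matrix.det_diagonal]
  have hsign : Equiv.Perm.sign σ = (-1)^k := by
    rw [hσ, map_pow, sign_finRotate (2*k+2), Odd.neg_one_pow ⟨k, by omega⟩]
  rw [hsign]
  have hprod : ∀ m K : ℕ, K ≤ m →
      ∏ j ∈ range m, (if j < K then (-1:ℤ) else 1) = (-1)^K := by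
    intro m
    induction m with
    | zero => intro K hK; interval_cases K; simp
    | succ m ih =>
      intro K hK
      rcases Nat.lt_or_ge K (m+1) with h | h
      · rw [Finset.prod_range_succ, if_neg (by omega), mul_one, ih K (by omega)]
      · have hKm : K = m+1 := by omega
        subst hKm
        rw [Finset.prod_congr rfl (fun j hj => if_pos (by simp at hj; omega)),
          Finset.prod_const, Finset.card_range]
  have : ∏ j : Fin (2*k+2), (if (j:ℕ) < k then (-1:ℤ) else 1)
      = ∏ j ∈ range (2*k+2), (if j < k then (-1:ℤ) else 1) := by
    rw [← Fin.prod_univ_eq_prod_range]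
  rw [this, hprod (2*k+2) k (by omega)]
  have h2 : ((((-1:ℤˣ))^k : ℤˣ) : ℤ) * (-1:ℤ)^k = 1 := by
    rw [Units.val_pow_eq_pow_val, Units.val_neg, Units.val_one, ← mul_pow]
    norm_num
  exact h2


lemma E2_base (k : ℕ) : (Bzmat k (2*k+2)).det = (Dzmat k).det := by
  set E2 : Matrix (Fin (2*k+2)) (Fin (2*k+2)) ℤ := Matrix.of fun a c =>
    (if (c:ℤ) = (a:ℤ) then 1 else 0)
      + (if ((c:ℤ) = 2*k+2 - (a:ℤ) ∧ 1 ≤ (a:ℕ) ∧ (a:ℕ) ≤ k) then 1 else 0) with hE2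
  have hdetE : E2.det = 1 := by
    rw [Matrix.det_of_upperTriangular]
    · rw [Finset.prod_eq_one]
      intro i _
      have hi := i.isLt
      simp only [hE2, Matrix.of_apply]
      split_ifs <;> omega
    · intro i j hij
      have h1 : (j:ℕ) < (i:ℕ) := hij
      have hi := i.isLt
      simp only [hE2, Matrix.of_apply]
      split_ifs <;> omega
  have hmul : E2 * Bzmat k (2*k+2) = Dzmat k := by
    refine Matrix.ext fun a b => ?_
    rw [Matrix.mul_apply]
    have e1 : ∀ c : Fin (2*k+2), E2 a c * Bzmat k (2*k+2) c b
        = (if (c:ℤ) = (a:ℤ) then Bent k c b else 0)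
          + (if (c:ℤ) = 2*k+2 - (a:ℤ) then
              (if 1 ≤ (a:ℕ) ∧ (a:ℕ) ≤ k then Bent k c b else 0) else 0) := by
      intro c
      simp only [hE2, Matrix.of_apply, Bzmat]
      split_ifs <;> first | ring1 | (exfalso; omega)
    rw [Finset.sum_congr rfl (fun c _ => e1 c), Finset.sum_add_distrib,
      sum_if_int (fun c : Fin (2*k+2) => Bent k c b) (a:ℤ) ⟨by omega, by exact_mod_cast a.isLt⟩]
    have ha := a.isLt
    have hb := b.isLt
    by_cases hW : 1 ≤ (a:ℕ) ∧ (a:ℕ) ≤ k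
    · rw [sum_if_int (fun c : Fin (2*k+2) =>
        if 1 ≤ (a:ℕ) ∧ (a:ℕ) ≤ k then Bent k c b else 0)
        (2*k+2 - (a:ℤ)) ⟨by omega, by push_cast; omega⟩]
      rw [if_pos hW]
      have hv : (((2*k+2 - (a:ℤ)).toNat : ℕ) : ℤ) = 2*k+2 - (a:ℤ) := by omega
      simp only [hv, Int.toNat_natCast]
      simp only [Dzmat, Matrix.of_apply, Bent]
      split_ifs <;> omega
    · have hzero : ∑ c : Fin (2*k+2), (if (c:ℤ) = 2*k+2 - (a:ℤ) then
          (if 1 ≤ (a:ℕ) ∧ (a:ℕ) ≤ k then Bent k c b else 0) else 0) = 0 := by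
        apply Finset.sum_eq_zero
        intro c _
        rw [if_neg hW]
        split_ifs <;> rfl
      rw [hzero]
      simp only [Int.toNat_natCast]
      simp only [Dzmat, Matrix.of_apply, Bent]
      split_ifs <;> omega
  calc (Bzmat k (2*k+2)).det = E2.det * (Bzmat k (2*k+2)).det := by rw [hdetE, one_mul]
    _ = (E2 * Bzmat k (2*k+2)).det := (Matrix.det_mul _ _).symm
    _ = (Dzmat k).det := by rw [hmul]

lemma step_lemma (k n' : ℕ) (hn' : k+1 ≤ n') :
    (Bzmat k (n' + (2*k+2))).det = (Bzmat k n').det * (Dzmat k).det := by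
  set n := n' + (2*k+2) with hn
  set E : Matrix (Fin n) (Fin n) ℤ := Matrix.of fun a c =>
    (if (c:ℤ) = (a:ℤ) then 1 else 0)
      + (if ((c:ℤ) = (a:ℤ) + (2*k+2) ∧ n' ≤ (a:ℕ) + k ∧ (a:ℕ) < n') then 1 else 0) with hE
  have hdetE : E.det = 1 := by
    rw [Matrix.det_of_upperTriangular]
    · rw [Finset.prod_eq_one]
      intro i _
      have hi := i.isLt
      simp only [hE, Matrix.of_apply]
      split_ifs <;> omega
    · intro i j hij
      have h1 : (j:ℕ) < (i:ℕ) := hij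
      simp only [hE, Matrix.of_apply]
      split_ifs <;> omega
  have hEB : ∀ a b : Fin n, (E * Bzmat k n) a b
      = Bent k a b
        + (if n' ≤ (a:ℕ)+k ∧ (a:ℕ) < n' then Bent k ((a:ℤ) + (2*k+2)) b else 0) := by
    intro a b
    rw [Matrix.mul_apply]
    have e1 : ∀ c : Fin n, E a c * Bzmat k n c b
        = (if (c:ℤ) = (a:ℤ) then Bent k c b else 0)
          + (if (c:ℤ) = (a:ℤ) + (2*k+2) then
              (if n' ≤ (a:ℕ)+k ∧ (a:ℕ) < n' then Bent k c b else 0) else 0) := by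
      intro c
      simp only [hE, Matrix.of_apply, Bzmat]
      split_ifs <;> first | ring1 | (exfalso; omega)
    rw [Finset.sum_congr rfl (fun c _ => e1 c), Finset.sum_add_distrib,
      sum_if_int (fun c : Fin n => Bent k c b) (a:ℤ) ⟨by omega, by exact_mod_cast a.isLt⟩]
    simp only [Int.toNat_natCast]
    by_cases hW : n' ≤ (a:ℕ)+k ∧ (a:ℕ) < n'
    · rw [sum_if_int (fun c : Fin n =>
        if n' ≤ (a:ℕ)+k ∧ (a:ℕ) < n' then Bent k c b else 0)
        ((a:ℤ) + (2*k+2)) ⟨by omega, by push_cast; omega⟩]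
      rw [if_pos hW, if_pos hW]
      have hv : (((((a:ℤ) + (2*k+2)).toNat) : ℕ) : ℤ) = (a:ℤ) + (2*k+2) := by omega
      simp only [hv]
    · have hzero : ∑ c : Fin n, (if (c:ℤ) = (a:ℤ) + (2*k+2) then
          (if n' ≤ (a:ℕ)+k ∧ (a:ℕ) < n' then Bent k c b else 0) else 0) = 0 := by
        apply Finset.sum_eq_zero
        intro c _
        rw [if_neg hW]
        split_ifs <;> rfl
      rw [hzero, if_neg hW]
  have hblocks : (E * Bzmat k n).submatrix finSumFinEquiv finSumFinEquiv
      = Matrix.fromBlocks (Bzmat k n') 0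
          (Matrix.of fun (i : Fin (2*k+2)) (j : Fin n') => Bent k ((n':ℤ) + (i:ℕ)) j)
          (Dzmat k) := by
    refine Matrix.ext ?_
    rintro (i | i) (j | j)
    · simp only [Matrix.submatrix_apply, finSumFinEquiv_apply_left,
        Matrix.fromBlocks_apply₁₁]
      rw [hEB]
      have hi : ((Fin.castAdd (2*k+2) i : Fin n) : ℕ) = (i:ℕ) := rfl
      have hj : ((Fin.castAdd (2*k+2) j : Fin n) : ℕ) = (j:ℕ) := rfl
      rw [hi, hj]
      have hiv := i.isLt
      have hjv := j.isLt
      by_cases hW : n' ≤ (i:ℕ)+k ∧ (i:ℕ) < n'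
      · rw [if_pos hW]
        have hz : Bent k ((i:ℤ) + (2*k+2)) (j:ℤ) = 0 := by
          unfold Bent
          split_ifs <;> omega
        rw [hz, add_zero]
        rfl
      · rw [if_neg hW, add_zero]
        rfl
    · simp only [Matrix.submatrix_apply, finSumFinEquiv_apply_left, finSumFinEquiv_apply_right,
        Matrix.fromBlocks_apply₁₂]
      rw [hEB]
      have hi : ((Fin.castAdd (2*k+2) i : Fin n) : ℕ) = (i:ℕ) := rfl
      have hj : ((Fin.natAdd n' j : Fin n) : ℕ) = n' + (j:ℕ) := rfl
      rw [hi, hj]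
      have hiv := i.isLt
      have hjv := j.isLt
      have hz : Bent k (i:ℤ) ((n' + (j:ℕ) : ℕ) : ℤ) = if n' ≤ (i:ℕ)+k ∧ (i:ℕ) < n'
          then (if ((n' + (j:ℕ) : ℕ) : ℤ) = (i:ℤ) + k then 1 else 0) else 0 := by
        unfold Bent
        push_cast
        split_ifs <;> omega
      by_cases hW : n' ≤ (i:ℕ)+k ∧ (i:ℕ) < n'
      · rw [if_pos hW, hz, if_pos hW]
        have hz2 : Bent k ((i:ℤ) + (2*k+2)) ((n' + (j:ℕ) : ℕ) : ℤ)
            = - (if ((n' + (j:ℕ) : ℕ) : ℤ) = (i:ℤ) + k then 1 else 0) := by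
          unfold Bent
          push_cast
          split_ifs <;> omega
        rw [hz2]
        simp
      · rw [if_neg hW, hz, if_neg hW, add_zero]
        rfl
    · simp only [Matrix.submatrix_apply, finSumFinEquiv_apply_left, finSumFinEquiv_apply_right,
        Matrix.fromBlocks_apply₂₁]
      rw [hEB]
      have hi : ((Fin.natAdd n' i : Fin n) : ℕ) = n' + (i:ℕ) := rfl
      have hj : ((Fin.castAdd (2*k+2) j : Fin n) : ℕ) = (j:ℕ) := rfl
      rw [hi, hj]
      rw [if_neg (by omega), add_zero, Matrix.of_apply]
      push_cast
      rfl
    · simp only [Matrix.submatrix_apply, finSumFinEquiv_apply_right,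
        Matrix.fromBlocks_apply₂₂]
      rw [hEB]
      have hi : ((Fin.natAdd n' i : Fin n) : ℕ) = n' + (i:ℕ) := rfl
      have hj : ((Fin.natAdd n' j : Fin n) : ℕ) = n' + (j:ℕ) := rfl
      rw [hi, hj]
      rw [if_neg (by omega), add_zero]
      have hiv := i.isLt
      have hjv := j.isLt
      simp only [Dzmat, Matrix.of_apply, Bent]
      push_cast
      split_ifs <;> omega
  calc (Bzmat k n).det = E.det * (Bzmat k n).det := by rw [hdetE, one_mul]
    _ = (E * Bzmat k n).det := (Matrix.det_mul _ _).symm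
    _ = ((E * Bzmat k n).submatrix finSumFinEquiv finSumFinEquiv).det :=
        (Matrix.det_submatrix_equiv_self finSumFinEquiv _).symm
    _ = (Bzmat k n').det * (Dzmat k).det := by
        rw [hblocks, Matrix.det_fromBlocks_zero₁₂]

lemma Bz_congr (k : ℕ) {m m' : ℕ} (h : m = m') : (Bzmat k m).det = (Bzmat k m').det := by
  subst h; rfl

lemma detB_div (k N : ℕ) :
    (Bzmat k ((k+1)*N)).det = (-1 : ℤ)^((k+1).choose 2 * N) := by
  induction N using Nat.strong_induction_on with
  | _ N ih =>
    match N with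
    | 0 =>
      rw [Bz_congr k (show (k+1)*0 = 0 by ring), Nat.mul_zero, pow_zero]
      exact Matrix.det_isEmpty
    | 1 =>
      rw [Bz_congr k (show (k+1)*1 = k+1 by ring), Bz_rev k, det_rev (k+1), Nat.mul_one]
    | (M+2) =>
      rcases Nat.eq_zero_or_pos M with hM | hM
      · subst hM
        rw [Bz_congr k (show (k+1)*(0+2) = 2*k+2 by ring), E2_base k, detD k]
        rw [show (k+1).choose 2 * (0+2) = 2 * (k+1).choose 2 from by ring, pow_mul]
        norm_num
      · have h1 : k+1 ≤ (k+1)*M := Nat.le_mul_of_pos_right _ hM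
        rw [Bz_congr k (show (k+1)*(M+2) = (k+1)*M + (2*k+2) by ring),
          step_lemma k ((k+1)*M) h1, ih M (by omega), detD k, mul_one]
        rw [show (k+1).choose 2 * (M+2) = (k+1).choose 2 * M + 2 * (k+1).choose 2 from by ring,
          pow_add, pow_mul]
        norm_num

lemma ker_zero (k n c₀ d₀ : ℕ) (hn : 2*k+3 ≤ n) (hc : c₀ < 2*k+2) (hd : d₀ < 2*k+2)
    (hcd : c₀ ≠ d₀) (hsum : c₀ + d₀ = 2*k)
    (hW : ∀ j, j < k → (n+j) % (2*k+2) ≠ c₀ ∧ (n+j) % (2*k+2) ≠ d₀) :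
    (Bzmat k n).det = 0 := by
  set w : ℕ → ℤ := fun b =>
    (if b % (2*k+2) = c₀ then 1 else 0) - (if b % (2*k+2) = d₀ then 1 else 0) with hw
  have wsmall : ∀ x, x < 2*k+2 →
      w x = (if x = c₀ then 1 else 0) - (if x = d₀ then 1 else 0) := by
    intro x hx
    rw [hw]
    simp only
    rw [Nat.mod_eq_of_lt hx]
  have wperiod : ∀ x, w (x + (2*k+2)) = w x := by
    intro x
    rw [hw]
    simp only
    rw [Nat.add_mod_right]
  rw [← Matrix.exists_mulVec_eq_zero_iff]
  refine ⟨fun b => w b, ?_, ?_⟩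
  · intro hv
    have h0 := congrFun hv (⟨c₀, by omega⟩ : Fin n)
    rw [wsmall c₀ hc] at h0
    rw [if_pos rfl, if_neg hcd] at h0
    simpa using h0
  · funext a
    have ha := a.isLt
    show ∑ b : Fin n, Bzmat k n a b * w b = 0
    have e1 : ∀ b : Fin n, Bzmat k n a b * w b
        = (if (b:ℤ) = (a:ℤ)+k then w b else 0)
          + ((if (b:ℤ) = (k:ℤ)-(a:ℤ) then (if 0 < (a:ℕ) then w b else 0) else 0)
            - (if (b:ℤ) = (a:ℤ)-k-2 then w b else 0)) := by
      intro b
      simp only [Bzmat, Matrix.of_apply, Bent]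
      split_ifs <;> first | ring1 | (exfalso; omega)
    rw [Finset.sum_congr rfl (fun b _ => e1 b), Finset.sum_add_distrib,
      Finset.sum_sub_distrib]
    by_cases hak : (a:ℕ) ≤ k
    · rw [sum_if_int (fun b : Fin n => w b) ((a:ℤ)+k) ⟨by omega, by push_cast; omega⟩,
        sum_if_int (fun b : Fin n => if 0 < (a:ℕ) then w b else 0) ((k:ℤ)-(a:ℤ))
          ⟨by omega, by push_cast; omega⟩,
        sum_if_int_zero (fun b : Fin n => w b) ((a:ℤ)-k-2) (by left; omega)]
    -- continued below
      have hA : (((a:ℤ)+(k:ℤ)).toNat) = (a:ℕ)+k := by omega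
      have hB : (((k:ℤ)-(a:ℤ)).toNat) = k-(a:ℕ) := by omega
      simp only [hA, hB]
      by_cases ha0 : 0 < (a:ℕ)
      · rw [if_pos ha0, wsmall ((a:ℕ)+k) (by omega), wsmall (k-(a:ℕ)) (by omega)]
        split_ifs <;> omega
      · rw [if_neg ha0, wsmall ((a:ℕ)+k) (by omega)]
        split_ifs <;> omega
    · rw [sum_if_int_zero (fun b : Fin n => if 0 < (a:ℕ) then w b else 0) ((k:ℤ)-(a:ℤ))
        (by left; omega)]
      by_cases ha2 : k+2 ≤ (a:ℕ)
      · rw [sum_if_int (fun b : Fin n => w b) ((a:ℤ)-k-2) ⟨by omega, by push_cast; omega⟩]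
        have hC : (((a:ℤ)-k-2).toNat) = (a:ℕ)-k-2 := by omega
        simp only [hC]
        by_cases h1 : (a:ℕ)+k < n
        · rw [sum_if_int (fun b : Fin n => w b) ((a:ℤ)+k) ⟨by omega, by push_cast; omega⟩]
          have hA : (((a:ℤ)+(k:ℤ)).toNat) = (a:ℕ)+k := by omega
          simp only [hA]
          rw [show (a:ℕ)+k = ((a:ℕ)-k-2) + (2*k+2) from by omega, wperiod]
          ring
        · rw [sum_if_int_zero (fun b : Fin n => w b) ((a:ℤ)+k) (by right; push_cast; omega)]
          have hj : (a:ℕ)+k-n < k := by omega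
          have hper : w ((a:ℕ)-k-2) = w (n + ((a:ℕ)+k-n)) := by
            rw [show n + ((a:ℕ)+k-n) = ((a:ℕ)-k-2) + (2*k+2) from by omega, wperiod]
          rw [hper, hw]
          simp only
          rw [if_neg (hW _ hj).1, if_neg (hW _ hj).2]
          ring
      · rw [sum_if_int_zero (fun b : Fin n => w b) ((a:ℤ)-k-2) (by left; omega),
          sum_if_int (fun b : Fin n => w b) ((a:ℤ)+k) ⟨by omega, by push_cast; omega⟩]
        have hA : (((a:ℤ)+(k:ℤ)).toNat) = (a:ℕ)+k := by omega
        simp only [hA]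
        rw [wsmall ((a:ℕ)+k) (by omega)]
        split_ifs <;> omega

lemma detB_nondvd (k n : ℕ) (h : ¬ (k+1) ∣ n) : (Bzmat k n).det = 0 := by
  have hn0 : n ≠ 0 := by rintro rfl; exact h (dvd_zero _)
  rcases lt_or_ge n (k+1) with h1 | h1
  · apply Matrix.det_eq_zero_of_column_eq_zero (⟨0, by omega⟩ : Fin n)
    intro i
    have hi := i.isLt
    simp only [Bzmat, Matrix.of_apply, Bent]
    split_ifs <;> omega
  have hne1 : n ≠ k+1 := by rintro rfl; exact h dvd_rfl
  rcases lt_or_ge n (2*k+2) with h2 | h2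
  · apply Matrix.det_eq_zero_of_row_eq_zero (⟨k+1, by omega⟩ : Fin n)
    intro j
    have hj := j.isLt
    simp only [Bzmat, Matrix.of_apply, Bent]
    split_ifs <;> omega
  have hne2 : n ≠ 2*k+2 := by rintro rfl; exact h ⟨2, by ring⟩
  have hn3 : 2*k+3 ≤ n := by omega
  set r := n % (2*k+2) with hr
  have hrlt : r < 2*k+2 := Nat.mod_lt _ (by omega)
  have hr0 : r ≠ 0 := by
    intro h0
    exact h (dvd_trans ⟨2, by ring⟩ (Nat.dvd_of_mod_eq_zero (hr ▸ h0 : n % (2*k+2) = 0)))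
  have hrk1 : r ≠ k+1 := by
    intro h0
    apply h
    apply Nat.dvd_of_mod_eq_zero
    have hmm := Nat.mod_mod_of_dvd n (⟨2, by ring⟩ : (k+1) ∣ (2*k+2))
    rw [← hmm, ← hr, h0, Nat.mod_self]
  have hmod : ∀ j, j < k → (n+j) % (2*k+2) = (if r + j < 2*k+2 then r+j else r+j-(2*k+2)) := by
    intro j hj
    have h1 : (n+j) % (2*k+2) = (r+j) % (2*k+2) := by
      conv_lhs => rw [Nat.add_mod, ← hr]
      rw [Nat.mod_eq_of_lt (show j < 2*k+2 by omega)]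
    rw [h1]
    by_cases hc : r+j < 2*k+2
    · rw [if_pos hc, Nat.mod_eq_of_lt hc]
    · rw [if_neg hc, Nat.mod_eq_sub_mod (by omega), Nat.mod_eq_of_lt (by omega)]
  by_cases hr1 : r ≤ k
  · by_cases hr2 : 2*r ≤ k+1
    · refine ker_zero k n (r-1) (2*k+1-r) hn3 (by omega) (by omega) (by omega) (by omega) ?_
      intro j hj
      rw [hmod j hj]
      split_ifs <;> exact ⟨by omega, by omega⟩
    · refine ker_zero k n (r+k) (k-r) hn3 (by omega) (by omega) (by omega) (by omega) ?_
      intro j hj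
      rw [hmod j hj]
      split_ifs <;> exact ⟨by omega, by omega⟩
  · by_cases hr2 : 2*r ≤ 3*k+3
    · refine ker_zero k n (r-1) (2*k+1-r) hn3 (by omega) (by omega) (by omega) (by omega) ?_
      intro j hj
      rw [hmod j hj]
      split_ifs <;> exact ⟨by omega, by omega⟩
    · refine ker_zero k n (r-k-2) (3*k+2-r) hn3 (by omega) (by omega) (by omega) (by omega) ?_
      intro j hj
      rw [hmod j hj]
      split_ifs <;> exact ⟨by omega, by omega⟩


/-- `d_0^{(k)}((k+1)n, t) = (-1)^{C(k+1,2)·n}` and `d_0^{(k)}(n,t) = 0` if `(k+1) ∤ n`. -/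
theorem hankel_det_column_k (k : ℕ) :
    (∀ n : ℕ,
      Matrix.det (Matrix.of fun i j : Fin ((k + 1) * n) =>
          motzkinPoly ((i : ℕ) + (j : ℕ)) (k : ℤ)) =
        (-1 : Polynomial ℤ) ^ ((k + 1).choose 2 * n)) ∧
    (∀ n : ℕ, ¬ (k + 1) ∣ n →
      Matrix.det (Matrix.of fun i j : Fin n =>
          motzkinPoly ((i : ℕ) + (j : ℕ)) (k : ℤ)) = 0) := by
  constructor
  · intro n
    rw [detH_eq_detB k ((k+1)*n), detB_div k n]
    push_cast
    ring
  · intro n hdvd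
    rw [detH_eq_detB k n, detB_nondvd k n hdvd]
    simp
end

section
/- Let t be a real number with t^2 > 4, and set \alpha = (t + \sqrt{t^2-4})/2 and \beta = (t - \sqrt{t^2-4})/2. Then for all nonnegative integers k and n, F_n^{(k)}(t) = \frac{\alpha^{(k+1)(n+1)} - \beta^{(k+1)(n+1)}}{\alpha^{k+1} - \beta^{k+1}}. -/
/-- The Lucas polynomials evaluated at a real `t`: `L_0 = 2`, `L_1 = t`,
`L_n = t·L_{n-1} - L_{n-2}`. -/
def lucasReal : ℕ → ℝ → ℝ
  | 0, _ => 2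
  | 1, t => t
  | n + 2, t => t * lucasReal (n + 1) t - lucasReal n t

/-- The generalized Fibonacci polynomials evaluated at a real `t`:
`F_0^{(k)} = 1`, `F_{-1}^{(k)} = 0` (so `F_1^{(k)} = L_{k+1}`),
`F_n^{(k)} = L_{k+1}·F_{n-1}^{(k)} - F_{n-2}^{(k)}`. -/
def genFibReal (k : ℕ) : ℕ → ℝ → ℝ
  | 0, _ => 1
  | 1, t => lucasReal (k + 1) t
  | n + 2, t => lucasReal (k + 1) t * genFibReal k (n + 1) t - genFibReal k n t

theorem lucasReal_eq (t a b : ℝ) (hab : a * b = 1) (hsum : a + b = t) :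
    ∀ m, lucasReal m t = a ^ m + b ^ m
  | 0 => by simp [lucasReal]; norm_num
  | 1 => by simp [lucasReal, ← hsum]
  | n + 2 => by
    rw [lucasReal, lucasReal_eq t a b hab hsum (n + 1), lucasReal_eq t a b hab hsum n, ← hsum]
    linear_combination (a ^ n + b ^ n) * hab

theorem genFibReal_key (t a b : ℝ) (hab : a * b = 1) (hsum : a + b = t) (k : ℕ) :
    ∀ n, genFibReal k n t * (a ^ (k + 1) - b ^ (k + 1)) =
      a ^ ((k + 1) * (n + 1)) - b ^ ((k + 1) * (n + 1))
  | 0 => by simp [genFibReal]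
  | 1 => by
    rw [genFibReal, lucasReal_eq t a b hab hsum (k + 1),
      show (k+1)*(1+1) = (k+1)+(k+1) by ring, pow_add, pow_add]
    ring
  | n + 2 => by
    rw [genFibReal, lucasReal_eq t a b hab hsum (k + 1), sub_mul, mul_assoc,
      genFibReal_key t a b hab hsum k (n + 1), genFibReal_key t a b hab hsum k n]
    have h1 : (a * b) ^ (k + 1) = 1 := by rw [hab]; simp
    rw [show (k+1)*(n+2+1) = (k+1) + (k+1)*(n+1+1) by ring,
        show (k+1)*(n+1+1) = (k+1) + (k+1)*(n+1) by ring, pow_add, pow_add, pow_add, pow_add]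
    have h2 : a ^ (k+1) * b ^ (k+1) = 1 := by rw [← mul_pow, h1]
    linear_combination (a ^ ((k+1)*(n+1)) - b ^ ((k+1)*(n+1))) * h2

/-- Binet-type formula: for `t² > 4`, with `α = (t+√(t²-4))/2` and `β = (t-√(t²-4))/2`,
`F_n^{(k)}(t) = (α^{(k+1)(n+1)} - β^{(k+1)(n+1)}) / (α^{k+1} - β^{k+1})`. -/
theorem genFibReal_binet (t : ℝ) (ht : t ^ 2 > 4) (k n : ℕ) :
    genFibReal k n t =
      (((t + Real.sqrt (t ^ 2 - 4)) / 2) ^ ((k + 1) * (n + 1)) -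
          ((t - Real.sqrt (t ^ 2 - 4)) / 2) ^ ((k + 1) * (n + 1))) /
        (((t + Real.sqrt (t ^ 2 - 4)) / 2) ^ (k + 1) -
          ((t - Real.sqrt (t ^ 2 - 4)) / 2) ^ (k + 1)) := by
  set s := Real.sqrt (t ^ 2 - 4) with hs
  have hs2 : s ^ 2 = t ^ 2 - 4 := Real.sq_sqrt (by linarith)
  have hspos : 0 < s := Real.sqrt_pos.mpr (by linarith)
  set a := (t + s) / 2 with ha
  set b := (t - s) / 2 with hb
  have hab : a * b = 1 := by rw [ha, hb]; nlinarith [hs2]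
  have hsum : a + b = t := by rw [ha, hb]; ring
  have ht0 : t ≠ 0 := by intro h; rw [h] at ht; norm_num at ht
  have hne : a ^ (k + 1) - b ^ (k + 1) ≠ 0 := by
    intro h
    have h' : a ^ (k + 1) = b ^ (k + 1) := by linarith [sub_eq_zero.mp h]
    have habs : |a| = |b| := by
      have : |a| ^ (k + 1) = |b| ^ (k + 1) := by rw [← abs_pow, ← abs_pow, h']
      exact (pow_left_inj₀ (abs_nonneg a) (abs_nonneg b) (Nat.succ_ne_zero k)).mp this
    rcases abs_eq_abs.mp habs with h1 | h1
    · have : s = 0 := by rw [ha, hb] at h1; linarith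
      linarith
    · have : t = 0 := by rw [ha, hb] at h1; linarith
      exact ht0 this
  rw [eq_div_iff hne]
  exact genFibReal_key t a b hab hsum k n
end

section
/- For all nonnegative integers m and n with n \geq 1 (or with the empty product convention for all n), the Hankel determinant of shifted Catalan numbers satisfies \det( C_{m+i+j} )_{i,j=0}^{n-1} = \prod_{1 \leq i \leq j \leq m-1} \frac{2n+i+j}{i+j}, where C_n = \binom{2n}{n}/(n+1) is the n-th Catalan number. -/
open Matrix Finset

variable {R : Type*} [CommRing R]


variable {R : Type*} [CommRing R]

lemma det_two_cols {ι : Type*} [DecidableEq ι] [Fintype ι] (C : Matrix ι ι R) (a b : ι)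
    (hab : a ≠ b)
    (h : ∀ k k', k' ≠ a → k' ≠ b → C k k' = if k = k' then 1 else 0) :
    C.det = C a a * C b b - C a b * C b a := by
  classical
  have key : ∀ σ : Equiv.Perm ι, σ ≠ 1 → σ ≠ Equiv.swap a b → (∏ i, C (σ i) i) = 0 := by
    intro σ h1 h2
    by_cases hfix : ∀ k, k ≠ a → k ≠ b → σ k = k
    · exfalso
      -- σ a and σ b lie in {a,b}
      have hmem : ∀ x, x ≠ a → x ≠ b → σ x = x := hfix
      have ha : σ a = a ∨ σ a = b := by
        by_contra hc
        push_neg at hc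
        have := hmem (σ a) hc.1 hc.2
        exact hc.1 (σ.injective this)
      have hb : σ b = a ∨ σ b = b := by
        by_contra hc
        push_neg at hc
        have := hmem (σ b) hc.1 hc.2
        exact hc.2 (σ.injective this)
      rcases ha with ha | ha
      · have hbb : σ b = b := by
          rcases hb with hb | hb
          · exact absurd (σ.injective (ha.trans hb.symm)) hab
          · exact hb
        exact h1 (Equiv.ext fun x => by
          by_cases hxa : x = a
          · simp [hxa, ha]
          · by_cases hxb : x = b
            · simp [hxb, hbb]
            · simp [hmem x hxa hxb])
      · have hba : σ b = a := by
          rcases hb with hb | hb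
          · exact hb
          · exact absurd (σ.injective (ha.trans hb.symm)).symm hab.symm
        exact h2 (Equiv.ext fun x => by
          by_cases hxa : x = a
          · simp [hxa, ha, Equiv.swap_apply_left]
          · by_cases hxb : x = b
            · simp [hxb, hba, Equiv.swap_apply_right]
            · simp [hmem x hxa hxb, Equiv.swap_apply_of_ne_of_ne hxa hxb])
    · push_neg at hfix
      obtain ⟨k, hka, hkb, hk⟩ := hfix
      refine Finset.prod_eq_zero (Finset.mem_univ k) ?_
      rw [h _ _ hka hkb, if_neg hk]
  rw [Matrix.det_apply]
  rw [← Finset.sum_subset (Finset.subset_univ ({1, Equiv.swap a b} : Finset (Equiv.Perm ι)))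
      (fun σ _ hσ => ?_)]
  · have hone : (1 : Equiv.Perm ι) ≠ Equiv.swap a b := by
      intro hc
      have h2 := congrArg (fun σ : Equiv.Perm ι => σ a) hc
      simp only [Equiv.Perm.one_apply, Equiv.swap_apply_left] at h2
      exact hab h2
    rw [Finset.sum_pair hone]
    have p1 : (∏ i, C ((1 : Equiv.Perm ι) i) i) = C a a * C b b := by
      rw [← Finset.prod_subset (Finset.subset_univ ({a, b} : Finset ι))
          (fun x _ hx => ?_)]
      · rw [Finset.prod_pair hab]
        simp
      · simp only [Finset.mem_insert, Finset.mem_singleton, not_or] at hx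
        simp [h _ _ hx.1 hx.2]
    have p2 : (∏ i, C (Equiv.swap a b i) i) = C b a * C a b := by
      rw [← Finset.prod_subset (Finset.subset_univ ({a, b} : Finset ι))
          (fun x _ hx => ?_)]
      · rw [Finset.prod_pair hab, Equiv.swap_apply_left, Equiv.swap_apply_right]
      · simp only [Finset.mem_insert, Finset.mem_singleton, not_or] at hx
        rw [Equiv.swap_apply_of_ne_of_ne hx.1 hx.2, h _ _ hx.1 hx.2, if_pos rfl]
    rw [p1, p2]
    simp [Equiv.Perm.sign_swap hab]
    ring
  · simp only [Finset.mem_insert, Finset.mem_singleton, not_or] at hσ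
    rw [key σ hσ.1 hσ.2]
    simp

lemma adjugate_entry {n : ℕ} (A : Matrix (Fin (n + 1)) (Fin (n + 1)) R) (i j : Fin (n + 1)) :
    adjugate A i j = (-1) ^ ((i : ℕ) + (j : ℕ)) * (A.submatrix j.succAbove i.succAbove).det := by
  rw [adjugate_apply, Matrix.det_succ_row _ j]
  rw [Finset.sum_eq_single i]
  · rw [Matrix.updateRow_self]
    simp only [Pi.single_eq_same, mul_one]
    have : (A.updateRow j (Pi.single i 1)).submatrix j.succAbove i.succAbove
        = A.submatrix j.succAbove i.succAbove := by
      ext p q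
      simp [Matrix.submatrix_apply, Matrix.updateRow_apply, Fin.succAbove_ne j p]
    rw [this, add_comm (j : ℕ) (i : ℕ)]
  · intro k _ hk
    rw [Matrix.updateRow_self]
    simp [Pi.single_eq_of_ne hk]
  · intro hi
    exact absurd (Finset.mem_univ i) hi

lemma dj_core {n : ℕ} (A : Matrix (Fin (n + 2)) (Fin (n + 2)) R) :
    A.det * ((A.submatrix Fin.succ Fin.succ).det * (A.submatrix Fin.castSucc Fin.castSucc).det
      - (A.submatrix Fin.castSucc Fin.succ).det * (A.submatrix Fin.succ Fin.castSucc).det)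
    = A.det ^ 2 * (A.submatrix (Fin.succ ∘ Fin.castSucc) (Fin.succ ∘ Fin.castSucc)).det := by
  classical
  set l : Fin (n + 2) := Fin.last (n + 1) with hl
  have h0l : (0 : Fin (n + 2)) ≠ l := by
    simp [hl, Fin.ext_iff]
  set C : Matrix (Fin (n + 2)) (Fin (n + 2)) R := Matrix.of fun i k =>
    if k = 0 then adjugate A i 0 else if k = l then adjugate A i l
    else if i = k then 1 else 0 with hC
  have hCdet : C.det = (A.submatrix Fin.succ Fin.succ).det
      * (A.submatrix Fin.castSucc Fin.castSucc).det
      - (A.submatrix Fin.castSucc Fin.succ).det * (A.submatrix Fin.succ Fin.castSucc).det := by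
    rw [det_two_cols C 0 l h0l (fun k k' hk0 hkl => by simp [hC, hk0, hkl])]
    have e00 : C 0 0 = (A.submatrix Fin.succ Fin.succ).det := by
      simp only [hC, Matrix.of_apply, if_pos rfl]
      rw [adjugate_entry]
      simp [Fin.succAbove_zero]
    have ell : C l l = (A.submatrix Fin.castSucc Fin.castSucc).det := by
      simp only [hC, Matrix.of_apply, if_neg h0l.symm, if_pos rfl]
      rw [adjugate_entry]
      simp [hl, Fin.succAbove_last, ← two_mul]
    have e0l : C 0 l = (-1 : R) ^ (n + 1) * (A.submatrix Fin.castSucc Fin.succ).det := by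
      simp only [hC, Matrix.of_apply, if_neg h0l.symm, if_pos rfl]
      rw [adjugate_entry]
      simp [hl, Fin.succAbove_last, Fin.succAbove_zero]
    have el0 : C l 0 = (-1 : R) ^ (n + 1) * (A.submatrix Fin.succ Fin.castSucc).det := by
      simp only [hC, Matrix.of_apply, if_pos rfl]
      rw [adjugate_entry]
      simp [hl, Fin.succAbove_last, Fin.succAbove_zero]
    have hsq : ((-1 : R) ^ (n + 1)) * ((-1 : R) ^ (n + 1)) = 1 := by
      rw [← pow_add]
      exact Even.neg_one_pow ⟨n + 1, rfl⟩
    rw [e00, ell, e0l, el0, mul_mul_mul_comm, hsq, one_mul]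
  set M : Matrix (Fin (n + 2)) (Fin (n + 2)) R := Matrix.of fun i k =>
    if k = 0 then (if i = 0 then A.det else 0)
    else if k = l then (if i = l then A.det else 0) else A i k with hM
  have hAC : A * C = M := by
    ext i k
    rw [Matrix.mul_apply]
    by_cases hk0 : k = 0
    · subst hk0
      have : ∀ j, C j 0 = adjugate A j 0 := fun j => by simp [hC]
      simp_rw [this]
      have : ∑ j, A i j * adjugate A j 0 = (A * adjugate A) i 0 := by
        rw [Matrix.mul_apply]
      rw [this, Matrix.mul_adjugate]
      simp [hM, Matrix.smul_apply, Matrix.one_apply]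
    · by_cases hkl : k = l
      · subst hkl
        have : ∀ j, C j l = adjugate A j l := fun j => by simp [hC, h0l.symm]
        simp_rw [this]
        have : ∑ j, A i j * adjugate A j l = (A * adjugate A) i l := by
          rw [Matrix.mul_apply]
        rw [this, Matrix.mul_adjugate]
        simp [hM, h0l.symm, Matrix.smul_apply, Matrix.one_apply]
      · have : ∀ j, C j k = if j = k then 1 else 0 := fun j => by simp [hC, hk0, hkl]
        simp_rw [this, mul_ite, mul_one, mul_zero]
        simp [hM, hk0, hkl]
  have hMdet : M.det = A.det ^ 2
      * (A.submatrix (Fin.succ ∘ Fin.castSucc) (Fin.succ ∘ Fin.castSucc)).det := by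
    rw [Matrix.det_succ_column_zero, Finset.sum_eq_single 0]
    · have hM00 : M 0 0 = A.det := by simp [hM]
      rw [hM00]
      have hsub : (M.submatrix Fin.succ Fin.succ).det
          = A.det * (A.submatrix (Fin.succ ∘ Fin.castSucc) (Fin.succ ∘ Fin.castSucc)).det := by
        rw [Matrix.det_succ_column (M.submatrix Fin.succ Fin.succ) (Fin.last n),
            Finset.sum_eq_single (Fin.last n)]
        · have hval : M.submatrix Fin.succ Fin.succ (Fin.last n) (Fin.last n) = A.det := by
            simp [hM, Matrix.submatrix_apply, Fin.succ_last, hl, (Fin.succ_ne_zero _)]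
          rw [hval]
          have hsign : ((-1 : R)) ^ ((Fin.last n : ℕ) + (Fin.last n : ℕ)) = 1 := by
            simp only [Fin.val_last]
            exact Even.neg_one_pow ⟨n, rfl⟩
          rw [hsign]
          have hinner : (M.submatrix Fin.succ Fin.succ).submatrix
              (Fin.last n).succAbove (Fin.last n).succAbove
              = A.submatrix (Fin.succ ∘ Fin.castSucc) (Fin.succ ∘ Fin.castSucc) := by
            ext p q
            simp only [Fin.succAbove_last, Matrix.submatrix_apply, Function.comp_apply]
            have hne0 : Fin.succ (Fin.castSucc q) ≠ 0 := Fin.succ_ne_zero _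
            have hnel : Fin.succ (Fin.castSucc q) ≠ l := by
              rw [Fin.succ_castSucc, hl]
              exact (Fin.castSucc_lt_last _).ne
            simp [hM, hne0, hnel]
          rw [hinner]
          ring
        · intro i _ hi
          have : M.submatrix Fin.succ Fin.succ i (Fin.last n) = 0 := by
            have hne0 : Fin.succ i ≠ 0 := Fin.succ_ne_zero _
            have hnel : Fin.succ i ≠ l := by
              rw [hl, ← Fin.succ_last]
              exact fun hc => hi (Fin.succ_injective _ hc)
            simp [hM, Matrix.submatrix_apply, Fin.succ_last, hne0, hnel, hl, hi]
          rw [this]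
          ring
        · intro hmem
          exact absurd (Finset.mem_univ _) hmem
      rw [Fin.succAbove_zero, hsub]
      simp
      ring
    · intro i _ hi
      have : M i 0 = 0 := by simp [hM, hi]
      rw [this]
      ring
    · intro hmem
      exact absurd (Finset.mem_univ _) hmem
  calc A.det * ((A.submatrix Fin.succ Fin.succ).det
        * (A.submatrix Fin.castSucc Fin.castSucc).det
        - (A.submatrix Fin.castSucc Fin.succ).det * (A.submatrix Fin.succ Fin.castSucc).det)
      = A.det * C.det := by rw [hCdet]
    _ = (A * C).det := (Matrix.det_mul A C).symm
    _ = M.det := by rw [hAC]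
    _ = A.det ^ 2 * (A.submatrix (Fin.succ ∘ Fin.castSucc) (Fin.succ ∘ Fin.castSucc)).det :=
        hMdet

lemma desnanot_jacobi {n : ℕ} (A : Matrix (Fin (n + 2)) (Fin (n + 2)) ℚ) :
    (A.submatrix Fin.succ Fin.succ).det * (A.submatrix Fin.castSucc Fin.castSucc).det
      - (A.submatrix Fin.castSucc Fin.succ).det * (A.submatrix Fin.succ Fin.castSucc).det
    = A.det * (A.submatrix (Fin.succ ∘ Fin.castSucc) (Fin.succ ∘ Fin.castSucc)).det := by
  classical
  set B : Matrix (Fin (n + 2)) (Fin (n + 2)) (Polynomial ℚ) := Matrix.charmatrix (-A) with hB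
  have hBdet : B.det ≠ 0 := (Matrix.charpoly_monic (-A)).ne_zero
  have hcancel : (B.submatrix Fin.succ Fin.succ).det
      * (B.submatrix Fin.castSucc Fin.castSucc).det
      - (B.submatrix Fin.castSucc Fin.succ).det * (B.submatrix Fin.succ Fin.castSucc).det
      = B.det * (B.submatrix (Fin.succ ∘ Fin.castSucc) (Fin.succ ∘ Fin.castSucc)).det := by
    have h := dj_core B
    rw [sq, mul_assoc] at h
    exact mul_left_cancel₀ hBdet h
  have hBA : B.map (Polynomial.evalRingHom (0 : ℚ)) = A := by
    ext i j
    by_cases hij : i = j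
    · subst hij
      simp [hB, Matrix.charmatrix_apply_eq]
    · simp [hB, Matrix.charmatrix_apply_ne _ _ _ hij]
  have h2 := congrArg (Polynomial.evalRingHom (0 : ℚ)) hcancel
  simp only [map_sub, _root_.map_mul, RingHom.map_det, RingHom.mapMatrix_apply,
    ← Matrix.submatrix_map, hBA] at h2
  exact h2



noncomputable def gq (j n : ℕ) : ℚ := ∏ i ∈ Finset.Icc 1 j, ((2 * n + i + j : ℚ) / (i + j : ℚ))

noncomputable def Pq (m n : ℕ) : ℚ :=
  ∏ j ∈ Finset.Icc 1 (m - 1), ∏ i ∈ Finset.Icc 1 j, ((2 * n + i + j : ℚ) / (i + j : ℚ))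

lemma Pq_def (m n : ℕ) : Pq m n = ∏ j ∈ Finset.Icc 1 (m - 1), gq j n := rfl

lemma fact_cast (a : ℕ) : ((Nat.factorial (a + 1) : ℕ) : ℚ) = ((a : ℚ) + 1) * Nat.factorial a := by
  push_cast [Nat.factorial_succ]
  ring

lemma fact_ne (a : ℕ) : ((Nat.factorial a : ℕ) : ℚ) ≠ 0 := by
  exact_mod_cast (Nat.factorial_pos a).ne'

lemma prod_Icc_cast (c j : ℕ) :
    (∏ i ∈ Finset.Icc 1 j, ((c : ℚ) + i)) = (Nat.factorial (c + j) : ℚ) / Nat.factorial c := by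
  induction j with
  | zero => simp [div_self (fact_ne c)]
  | succ j ih =>
    rw [Finset.prod_Icc_succ_top (by omega : 1 ≤ j + 1), ih]
    rw [show c + (j + 1) = (c + j) + 1 from rfl, fact_cast]
    field_simp
    push_cast
    ring

lemma gq_pos (j n : ℕ) : 0 < gq j n := by
  unfold gq
  apply Finset.prod_pos
  intro i hi
  have h1 : 1 ≤ i := (Finset.mem_Icc.mp hi).1
  have h1q : (1 : ℚ) ≤ (i : ℚ) := by exact_mod_cast h1
  have hn : (0 : ℚ) ≤ (n : ℚ) := Nat.cast_nonneg n
  have hj : (0 : ℚ) ≤ (j : ℚ) := Nat.cast_nonneg j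
  apply div_pos <;> nlinarith

lemma gq_closed (j n : ℕ) :
    gq j n = (Nat.factorial (2 * n + j + j) : ℚ) * Nat.factorial j
      / (Nat.factorial (2 * n + j) * Nat.factorial (j + j)) := by
  unfold gq
  rw [Finset.prod_div_distrib]
  have h1 : (∏ i ∈ Finset.Icc 1 j, ((2 * (n : ℚ) + i + j))) =
      ∏ i ∈ Finset.Icc 1 j, (((2 * n + j : ℕ) : ℚ) + i) := by
    refine Finset.prod_congr rfl fun i _ => by push_cast; ring
  have h2 : (∏ i ∈ Finset.Icc 1 j, (((i : ℚ)) + j)) =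
      ∏ i ∈ Finset.Icc 1 j, (((j : ℕ) : ℚ) + i) := by
    refine Finset.prod_congr rfl fun i _ => by push_cast; ring
  rw [h1, h2, prod_Icc_cast, prod_Icc_cast]
  rw [show 2 * n + j + j = (2 * n + j) + j from by ring]
  field_simp

lemma fact_cast2 (a : ℕ) : ((Nat.factorial (a + 2) : ℕ) : ℚ)
    = ((a : ℚ) + 2) * ((a : ℚ) + 1) * Nat.factorial a := by
  rw [show a + 2 = (a + 1) + 1 from rfl, fact_cast, fact_cast]
  push_cast
  ring

lemma fact_cast4 (a : ℕ) : ((Nat.factorial (a + 4) : ℕ) : ℚ)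
    = ((a : ℚ) + 4) * ((a : ℚ) + 3) * ((a : ℚ) + 2) * ((a : ℚ) + 1) * Nat.factorial a := by
  rw [show a + 4 = (a + 2) + 2 from rfl, fact_cast2, fact_cast2]
  push_cast
  ring

set_option maxHeartbeats 2000000 in
lemma GA (m n : ℕ) :
    gq m (n + 2) * gq (m + 2) n * ((2 * (m : ℚ) + 3) * (2 * (n : ℚ) + (m : ℚ) + 4)) =
    gq (m + 1) (n + 1) ^ 2 * ((2 * (m : ℚ) + 1) * (2 * (n : ℚ) + (m : ℚ) + 3)) := by
  rw [gq_closed, gq_closed, gq_closed]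
  rw [show 2 * (n + 2) + m + m = (2 * n + m + m) + 4 from by omega,
      show 2 * n + (m + 2) + (m + 2) = (2 * n + m + m) + 4 from by omega,
      show 2 * (n + 1) + (m + 1) + (m + 1) = (2 * n + m + m) + 4 from by omega,
      show 2 * (n + 2) + m = (2 * n + m) + 4 from by omega,
      show 2 * n + (m + 2) = (2 * n + m) + 2 from by omega,
      show 2 * (n + 1) + (m + 1) = ((2 * n + m) + 2) + 1 from by omega,
      show (m + 2) + (m + 2) = (m + m) + 4 from by omega,
      show (m + 1) + (m + 1) = (m + m) + 2 from by omega]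
  rw [fact_cast4 (2 * n + m + m), fact_cast4 (2 * n + m), fact_cast ((2 * n + m) + 2), fact_cast2 (2 * n + m), fact_cast4 (m + m), fact_cast2 (m + m),
      fact_cast2 m, fact_cast m]
  have h1 := fact_ne (2 * n + m + m)
  have h2 := fact_ne (2 * n + m)
  have h3 := fact_ne (m + m)
  have h4 := fact_ne m
  have c1 : (0:ℚ) ≤ (m:ℚ) := Nat.cast_nonneg m
  have c2 : (0:ℚ) ≤ (n:ℚ) := Nat.cast_nonneg n
  push_cast
  field_simp
  ring

set_option maxHeartbeats 2000000 in
lemma GB (m n : ℕ) :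
    gq m (n + 1) * gq (m + 2) (n + 1) * ((2 * (m : ℚ) + 3) * (2 * (n : ℚ) + (m : ℚ) + 4))
      * ((2 * (n : ℚ) + 2 * (m : ℚ) + 3) * ((n : ℚ) + (m : ℚ) + 2)) =
    gq (m + 1) (n + 1) ^ 2 * ((2 * (n : ℚ) + 2 * (m : ℚ) + 5) * ((n : ℚ) + (m : ℚ) + 3))
      * ((2 * (m : ℚ) + 1) * (2 * (n : ℚ) + (m : ℚ) + 3)) := by
  rw [gq_closed, gq_closed, gq_closed]
  rw [show 2 * (n + 1) + (m + 2) + (m + 2) = ((2 * n + m + m) + 2) + 4 from by omega,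
      show 2 * (n + 1) + (m + 1) + (m + 1) = ((2 * n + m + m) + 2) + 2 from by omega,
      show 2 * (n + 1) + m + m = (2 * n + m + m) + 2 from by omega,
      show 2 * (n + 1) + (m + 2) = ((2 * n + m) + 2) + 2 from by omega,
      show 2 * (n + 1) + (m + 1) = ((2 * n + m) + 2) + 1 from by omega,
      show 2 * (n + 1) + m = (2 * n + m) + 2 from by omega,
      show (m + 2) + (m + 2) = (m + m) + 4 from by omega,
      show (m + 1) + (m + 1) = (m + m) + 2 from by omega]
  rw [fact_cast4 ((2 * n + m + m) + 2), fact_cast2 ((2 * n + m + m) + 2),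
      fact_cast2 (2 * n + m + m),
      fact_cast2 ((2 * n + m) + 2), fact_cast ((2 * n + m) + 2), fact_cast2 (2 * n + m),
      fact_cast4 (m + m), fact_cast2 (m + m), fact_cast2 m, fact_cast m]
  have h1 := fact_ne (2 * n + m + m)
  have h2 := fact_ne (2 * n + m)
  have h3 := fact_ne (m + m)
  have h4 := fact_ne m
  have c1 : (0:ℚ) ≤ (m:ℚ) := Nat.cast_nonneg m
  have c2 : (0:ℚ) ≤ (n:ℚ) := Nat.cast_nonneg n
  push_cast
  field_simp
  ring

lemma Pq_succ (m n : ℕ) : Pq (m + 1) n = Pq m n * gq m n := by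
  cases m with
  | zero =>
    rw [Pq_def, Pq_def]
    unfold gq
    rw [Finset.Icc_eq_empty (by omega : ¬(1:ℕ) ≤ 0 + 1 - 1), Finset.prod_empty]
    simp
  | succ m =>
    rw [Pq_def, Pq_def, show m + 1 + 1 - 1 = m + 1 from rfl, show m + 1 - 1 = m from rfl,
      Finset.prod_Icc_succ_top (by omega : 1 ≤ m + 1)]

lemma Pq_pos (m n : ℕ) : 0 < Pq m n := by
  rw [Pq_def]
  exact Finset.prod_pos fun j _ => gq_pos j n

lemma Pq_zero (n : ℕ) : Pq 0 n = 1 := by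
  rw [Pq_def, show (0:ℕ) - 1 = 0 from rfl, Finset.Icc_eq_empty (by omega), Finset.prod_empty]

lemma Pq_one (n : ℕ) : Pq 1 n = 1 := by
  rw [Pq_def, show (1:ℕ) - 1 = 0 from rfl, Finset.Icc_eq_empty (by omega), Finset.prod_empty]

lemma Pq_two (n : ℕ) : Pq 2 n = (n : ℚ) + 1 := by
  rw [Pq_def, show (2:ℕ) - 1 = 1 from rfl, Finset.Icc_self, Finset.prod_singleton]
  unfold gq
  rw [Finset.Icc_self, Finset.prod_singleton]
  push_cast
  rw [div_eq_iff (by norm_num : (1:ℚ) + 1 ≠ 0)]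
  ring

lemma Pq_nzero (m : ℕ) : Pq m 0 = 1 := by
  rw [Pq_def]
  refine Finset.prod_eq_one fun j hj => ?_
  refine Finset.prod_eq_one fun i hi => ?_
  have h1 : 1 ≤ i := (Finset.mem_Icc.mp hi).1
  have h1q : (1 : ℚ) ≤ (i : ℚ) := by exact_mod_cast h1
  have hj : (0 : ℚ) ≤ (j : ℚ) := Nat.cast_nonneg j
  rw [Nat.cast_zero]
  rw [div_eq_one_iff_eq (by nlinarith)]
  ring

lemma keyA (m n : ℕ) :
    Pq m (n + 2) * Pq (m + 2) n * ((2 * (m : ℚ) + 1) * (2 * (n : ℚ) + (m : ℚ) + 3)) =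
    Pq (m + 1) (n + 1) ^ 2 * (((n : ℚ) + 1) * (2 * (n : ℚ) + 3)) := by
  induction m with
  | zero =>
    rw [Pq_zero, Pq_two, Pq_one]
    push_cast
    ring
  | succ m ih =>
    rw [show m + 1 + 2 = (m + 2) + 1 from rfl, Pq_succ (m + 2) n, Pq_succ (m + 1) (n + 1),
      Pq_succ m (n + 2)]
    push_cast
    have hc : (2 * (m : ℚ) + 1) * (2 * (n : ℚ) + (m : ℚ) + 3) ≠ 0 := by positivity
    apply mul_right_cancel₀ hc
    linear_combination (gq m (n + 2) * gq (m + 2) n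
        * ((2 * (m : ℚ) + 3) * (2 * (n : ℚ) + (m : ℚ) + 4))) * ih
      + (Pq (m + 1) (n + 1) ^ 2 * (((n : ℚ) + 1) * (2 * (n : ℚ) + 3))) * GA m n

lemma keyB (m n : ℕ) :
    Pq m (n + 1) * Pq (m + 2) (n + 1) * ((2 * (n : ℚ) + (m : ℚ) + 3) * (2 * (m : ℚ) + 1)) =
    Pq (m + 1) (n + 1) ^ 2 * ((2 * (n : ℚ) + 2 * (m : ℚ) + 3) * ((n : ℚ) + (m : ℚ) + 2)) := by
  induction m with
  | zero =>
    rw [Pq_zero, Pq_two, Pq_one]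
    push_cast
    ring
  | succ m ih =>
    rw [show m + 1 + 2 = (m + 2) + 1 from rfl, Pq_succ (m + 2) (n + 1),
      Pq_succ (m + 1) (n + 1), Pq_succ m (n + 1)]
    rw [Pq_succ (m + 1) (n + 1), Pq_succ m (n + 1)] at ih
    push_cast
    have hcd : ((2 * (n : ℚ) + (m : ℚ) + 3) * (2 * (m : ℚ) + 1))
        * ((2 * (n : ℚ) + 2 * (m : ℚ) + 3) * ((n : ℚ) + (m : ℚ) + 2)) ≠ 0 := by positivity
    apply mul_right_cancel₀ hcd
    linear_combination (gq m (n + 1) * gq (m + 2) (n + 1)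
        * ((2 * (m : ℚ) + 3) * (2 * (n : ℚ) + (m : ℚ) + 4))
        * ((2 * (n : ℚ) + 2 * (m : ℚ) + 3) * ((n : ℚ) + (m : ℚ) + 2))) * ih
      + (Pq m (n + 1) ^ 2 * gq m (n + 1) ^ 2
        * ((2 * (n : ℚ) + 2 * (m : ℚ) + 3) * ((n : ℚ) + (m : ℚ) + 2))) * GB m n

lemma djP (m n : ℕ) :
    Pq m (n + 2) * Pq (m + 2) n + Pq (m + 1) (n + 1) ^ 2
      = Pq m (n + 1) * Pq (m + 2) (n + 1) := by
  have hc : ((2 * (m : ℚ) + 1) * (2 * (n : ℚ) + (m : ℚ) + 3)) ≠ 0 := by positivity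
  apply mul_right_cancel₀ hc
  linear_combination keyA m n - keyB m n

lemma gq_one (m : ℕ) : gq m 1 = 2 * (2 * (m : ℚ) + 1) / ((m : ℚ) + 2) := by
  rw [gq_closed]
  rw [show 2 * 1 + m + m = (m + m) + 2 from by omega, show 2 * 1 + m = m + 2 from by omega]
  rw [fact_cast2 (m + m), fact_cast2 m]
  have h3 := fact_ne (m + m)
  have h4 := fact_ne m
  have c1 : (0:ℚ) ≤ (m:ℚ) := Nat.cast_nonneg m
  push_cast
  rw [div_eq_div_iff (by positivity) (by positivity)]
  ring

lemma catq (m : ℕ) : (catalan m : ℚ) = Pq m 1 := by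
  induction m with
  | zero => rw [Pq_zero]; simp
  | succ m ih =>
    have q1 : ((m : ℚ) + 1 + 1) * (catalan (m + 1) : ℚ) = (Nat.centralBinom (m + 1) : ℚ) := by
      exact_mod_cast succ_mul_catalan_eq_centralBinom (m + 1)
    have q2 : ((m : ℚ) + 1) * (Nat.centralBinom (m + 1) : ℚ)
        = 2 * (2 * (m : ℚ) + 1) * (Nat.centralBinom m : ℚ) := by
      exact_mod_cast Nat.succ_mul_centralBinom_succ m
    have q3 : ((m : ℚ) + 1) * (catalan m : ℚ) = (Nat.centralBinom m : ℚ) := by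
      exact_mod_cast succ_mul_catalan_eq_centralBinom m
    have key : ((m : ℚ) + 2) * (catalan (m + 1) : ℚ)
        = 2 * (2 * (m : ℚ) + 1) * (catalan m : ℚ) := by
      have hm1 : ((m : ℚ) + 1) ≠ 0 := by positivity
      apply mul_left_cancel₀ hm1
      linear_combination ((m : ℚ) + 1) * q1 + q2 - 2 * (2 * (m : ℚ) + 1) * q3
    rw [Pq_succ m 1, ← ih, gq_one]
    have hm2 : ((m : ℚ) + 2) ≠ 0 := by positivity
    rw [mul_div_assoc', eq_div_iff hm2]
    push_cast
    linear_combination key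

lemma hankel_eq : ∀ n m : ℕ,
    (Matrix.of fun i j : Fin n => (catalan (m + (i : ℕ) + (j : ℕ)) : ℚ)).det = Pq m n := by
  intro n
  induction n using Nat.strong_induction_on with
  | _ n ih =>
    obtain _ | n := n
    · intro m
      rw [Matrix.det_fin_zero, Pq_nzero]
    · obtain _ | k := n
      · intro m
        rw [Matrix.det_fin_one]
        simpa using catq m
      · intro m
        show (Matrix.of fun i j : Fin (k + 2) =>
          (catalan (m + (i : ℕ) + (j : ℕ)) : ℚ)).det = Pq m (k + 2)
        have hDJ := desnanot_jacobi (Matrix.of fun i j : Fin (k + 2) =>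
          (catalan (m + (i : ℕ) + (j : ℕ)) : ℚ))
        have e1 : (Matrix.of fun i j : Fin (k + 2) =>
            (catalan (m + (i : ℕ) + (j : ℕ)) : ℚ)).submatrix Fin.succ Fin.succ
            = Matrix.of fun i j : Fin (k + 1) => (catalan (m + 2 + (i : ℕ) + (j : ℕ)) : ℚ) := by
          ext i j
          simp only [Matrix.submatrix_apply, Matrix.of_apply, Fin.val_succ]
          congr 2
          omega
        have e2 : (Matrix.of fun i j : Fin (k + 2) =>
            (catalan (m + (i : ℕ) + (j : ℕ)) : ℚ)).submatrix Fin.castSucc Fin.castSucc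
            = Matrix.of fun i j : Fin (k + 1) => (catalan (m + (i : ℕ) + (j : ℕ)) : ℚ) := by
          ext i j
          simp only [Matrix.submatrix_apply, Matrix.of_apply, Fin.coe_castSucc]
        have e3 : (Matrix.of fun i j : Fin (k + 2) =>
            (catalan (m + (i : ℕ) + (j : ℕ)) : ℚ)).submatrix Fin.castSucc Fin.succ
            = Matrix.of fun i j : Fin (k + 1) => (catalan (m + 1 + (i : ℕ) + (j : ℕ)) : ℚ) := by
          ext i j
          simp only [Matrix.submatrix_apply, Matrix.of_apply, Fin.coe_castSucc, Fin.val_succ]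
          congr 2
          omega
        have e4 : (Matrix.of fun i j : Fin (k + 2) =>
            (catalan (m + (i : ℕ) + (j : ℕ)) : ℚ)).submatrix Fin.succ Fin.castSucc
            = Matrix.of fun i j : Fin (k + 1) => (catalan (m + 1 + (i : ℕ) + (j : ℕ)) : ℚ) := by
          ext i j
          simp only [Matrix.submatrix_apply, Matrix.of_apply, Fin.coe_castSucc, Fin.val_succ]
          congr 2
          omega
        have e5 : (Matrix.of fun i j : Fin (k + 2) =>
            (catalan (m + (i : ℕ) + (j : ℕ)) : ℚ)).submatrix
              (Fin.succ ∘ Fin.castSucc) (Fin.succ ∘ Fin.castSucc)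
            = Matrix.of fun i j : Fin k => (catalan (m + 2 + (i : ℕ) + (j : ℕ)) : ℚ) := by
          ext i j
          simp only [Matrix.submatrix_apply, Matrix.of_apply, Function.comp_apply,
            Fin.coe_castSucc, Fin.val_succ]
          congr 2
          omega
        rw [e1, e2, e3, e4, e5] at hDJ
        rw [ih (k + 1) (by omega) (m + 2), ih (k + 1) (by omega) m,
          ih (k + 1) (by omega) (m + 1), ih k (by omega) (m + 2)] at hDJ
        have key : (Matrix.of fun i j : Fin (k + 2) =>
            (catalan (m + (i : ℕ) + (j : ℕ)) : ℚ)).det * Pq (m + 2) k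
            = Pq m (k + 2) * Pq (m + 2) k := by
          linear_combination (-1 : ℚ) * hDJ - djP m k
        exact mul_right_cancel₀ (Pq_pos (m + 2) k).ne' key

/-- Hankel determinants of shifted Catalan numbers:
`det(C_{m+i+j})_{i,j=0}^{n-1} = ∏_{1 ≤ i ≤ j ≤ m-1} (2n+i+j)/(i+j)`. -/
theorem hankel_det_shifted_catalan (m n : ℕ) :
    Matrix.det (Matrix.of fun i j : Fin n => (catalan (m + (i : ℕ) + (j : ℕ)) : ℚ)) =
      ∏ j ∈ Finset.Icc 1 (m - 1), ∏ i ∈ Finset.Icc 1 j,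
        ((2 * n + i + j : ℚ) / (i + j : ℚ)) := by
  exact hankel_eq n m
end

section
/- For every nonnegative integer n, the evaluation of the Motzkin polynomial at t = 2 equals the shifted Catalan number: M_n(2) = C_{n+1}, where C_j = \binom{2j}{j}/(j+1). -/
open Polynomial

/-- Binomial coefficients with integer lower index, zero for negative index. -/
def cc (m : ℕ) (j : ℤ) : ℤ := if j < 0 then 0 else m.choose j.toNat

lemma cc_pascal (m : ℕ) (j : ℤ) : cc (m + 1) j = cc m j + cc m (j - 1) := by
  unfold cc
  by_cases hj : j < 0
  · have : j - 1 < 0 := by omega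
    simp [hj, this]
  · push_neg at hj
    lift j to ℕ using hj with k
    cases k with
    | zero => norm_num
    | succ k =>
      have h1 : ¬((k : ℤ) + 1 < 0) := by omega
      have h2 : ¬((k : ℤ) + 1 - 1 < 0) := by omega
      have h3 : ((k : ℤ) + 1 - 1).toNat = k := by omega
      have h4 : ((k : ℤ) + 1).toNat = k + 1 := by omega
      push_cast
      rw [if_neg h1, if_neg h1, if_neg h2, h3, h4, Nat.choose_succ_succ]
      push_cast; ring

lemma cc_pascal2 (m : ℕ) (j : ℤ) :
    cc (m + 2) j = cc m j + 2 * cc m (j - 1) + cc m (j - 2) := by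
  rw [show m + 2 = (m + 1) + 1 from rfl, cc_pascal, cc_pascal, cc_pascal,
    show j - 1 - 1 = j - 2 by ring]
  ring

lemma motzkin_eval (n : ℕ) : ∀ k : ℤ, 0 ≤ k →
    (motzkinPoly n k).eval 2 = cc (2 * n + 1) ((n : ℤ) - k) - cc (2 * n + 1) ((n : ℤ) - k - 1) := by
  induction n with
  | zero =>
    intro k hk
    rw [motzkinPoly]
    by_cases h : k = 0
    · subst h; simp [cc]
    · have h1 : (0 : ℤ) - k < 0 := by omega
      have h2 : (0 : ℤ) - k - 1 < 0 := by omega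
      rw [if_neg h]
      simp only [eval_zero]
      unfold cc
      rw [if_pos (show ((0:ℕ):ℤ) - k < 0 by omega), if_pos (show ((0:ℕ):ℤ) - k - 1 < 0 by omega)]
      norm_num
  | succ n ih =>
    intro k hk
    rw [motzkinPoly, if_neg (by omega)]
    simp only [eval_add, eval_mul, eval_X]
    by_cases h0 : k = 0
    · subst h0
      rw [motzkinPoly_neg n (0 - 1) (by omega), eval_zero]
      rw [ih 0 le_rfl, ih (0 + 1) (by omega)]
      have hp1 := cc_pascal2 (2 * n + 1) ((n : ℤ) + 1 - 0)
      have hp2 := cc_pascal2 (2 * n + 1) ((n : ℤ) + 1 - 0 - 1)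
      have hsym : cc (2 * n + 1) ((n : ℤ) + 1) = cc (2 * n + 1) (n : ℤ) := by
        unfold cc
        rw [if_neg (by omega), if_neg (by omega),
          show ((n : ℤ) + 1).toNat = n + 1 by omega, show ((n : ℤ)).toNat = n by omega,
          Nat.choose_symm_half]
      have harg : (2 * (n + 1) + 1) = (2 * n + 1) + 2 := by ring
      rw [harg]
      push_cast at *
      ring_nf
      ring_nf at hp1 hp2 hsym
      linarith
    · have hk1 : (1 : ℤ) ≤ k := by omega
      rw [ih (k - 1) (by omega), ih k hk, ih (k + 1) (by omega)]
      have hp1 := cc_pascal2 (2 * n + 1) ((n : ℤ) + 1 - k)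
      have hp2 := cc_pascal2 (2 * n + 1) ((n : ℤ) + 1 - k - 1)
      have harg : (2 * (n + 1) + 1) = (2 * n + 1) + 2 := by ring
      rw [harg]
      push_cast at *
      ring_nf
      ring_nf at hp1 hp2
      linarith

/-- `M_n(2) = C_{n+1}`, the shifted Catalan numbers. -/
theorem motzkinPoly_eval_two (n : ℕ) :
    (motzkinPoly n 0).eval 2 = (catalan (n + 1) : ℤ) := by
  rw [motzkin_eval n 0 le_rfl]
  cases n with
  | zero => simp [cc, catalan]
  | succ m =>
    set n := m + 1 with hn
    have h1 : cc (2 * n + 1) ((n : ℤ) - 0) = ((2 * n + 1).choose n : ℤ) := by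
      unfold cc; rw [if_neg (by omega), show ((n : ℤ) - 0).toNat = n by omega]
    have h2 : cc (2 * n + 1) ((n : ℤ) - 0 - 1) = ((2 * n + 1).choose (n - 1) : ℤ) := by
      unfold cc; rw [if_neg (by omega), show ((n : ℤ) - 0 - 1).toNat = n - 1 by omega]
    rw [h1, h2]
    -- key identities in ℕ
    have key : (2 * n + 1).choose ((n - 1) + 1) * ((n - 1) + 1) =
        (2 * n + 1).choose (n - 1) * (2 * n + 1 - (n - 1)) := Nat.choose_succ_right_eq _ _
    have hm1 : (n - 1) + 1 = n := by omega
    have hm2 : 2 * n + 1 - (n - 1) = n + 2 := by omega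
    rw [hm1, hm2] at key
    -- key : choose (2n+1) n * n = choose (2n+1) (n-1) * (n+2)
    have hcat : ((n : ℕ) + 2) * catalan (n + 1) = (n + 1).centralBinom :=
      succ_mul_catalan_eq_centralBinom (n + 1)
    have hcb : (n + 1).centralBinom = (2 * n + 2).choose (n + 1) := by
      rw [Nat.centralBinom, show 2 * (n + 1) = 2 * n + 2 by ring]
    have hpas : (2 * n + 2).choose (n + 1) = 2 * (2 * n + 1).choose n := by
      rw [show 2 * n + 2 = (2 * n + 1) + 1 from rfl, Nat.choose_succ_succ,
        Nat.choose_symm_half]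
      ring
    have hfin : ((n : ℤ) + 2) * (((2 * n + 1).choose n : ℤ) - ((2 * n + 1).choose (n - 1) : ℤ))
        = ((n : ℤ) + 2) * (catalan (n + 1) : ℤ) := by
      have keyz : ((2 * n + 1).choose n : ℤ) * n = ((2 * n + 1).choose (n - 1) : ℤ) * (n + 2) := by
        exact_mod_cast key
      have hcatz : ((n : ℤ) + 2) * (catalan (n + 1) : ℤ) = 2 * ((2 * n + 1).choose n : ℤ) := by
        have := hcat
        rw [hcb, hpas] at this
        exact_mod_cast this
      rw [hcatz]; linarith
    have := mul_left_cancel₀ (show ((n : ℤ) + 2) ≠ 0 by positivity) hfin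
    exact this
end
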